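/- arXiv:1712.08137 — 6 statements merged into one kernel-verified Lean document; each statement's English description precedes it below -/
import Mathlib

section
/- Let k̄ and l̄ be nonnegative integers and let k be an integer with −l̄ ≤ k ≤ k̄. Then q^{k̄,(n)}(k) ≤ q̃^{(n)}(2k̄ − k + 2) and q_{l̄}^{(n)}(k) ≤ q̃^{(n)}(2l̄ + k + 2). -/
open Finset

open scoped Classical

noncomputable section

namespace HScut

/-- Level of a jump path `s : Fin n → ℤ` at time `t` (sum of the first `t` jumps). -/
def levelAt (n : ℕ) (s : Fin n → ℤ) (t : ℕ) : ℤ :=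
  ∑ i ∈ Finset.univ.filter (fun i : Fin n => (i : ℕ) < t), s i

/-- Jump paths of length `n` with jumps of amplitude at most `m`. -/
def paths (n m : ℕ) : Finset (Fin n → ℤ) :=
  Fintype.piFinset fun _ => Finset.Icc (-(m : ℤ)) (m : ℤ)

/-- Weight `π(s) = ∏ q (s i)` of a jump path. -/
def pathWeight (n : ℕ) (q : ℤ → ℝ) (s : Fin n → ℤ) : ℝ :=
  ∏ i, q (s i)

/-- Modified weight `π̃(s)`, where each `q (±i)` (`i ≠ 0`) is replaced by `max (q i) (q (-i))`
(which equals `w_i / n`). -/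
def modWeight (n : ℕ) (q : ℤ → ℝ) (s : Fin n → ℤ) : ℝ :=
  ∏ i, (if s i = 0 then q 0 else max (q (s i)) (q (-s i)))

/-- `q^{(n)}(k)`: probability of a net balance of `k` cumulative jumps at maturity. -/
def qfull (n m : ℕ) (q : ℤ → ℝ) (k : ℤ) : ℝ :=
  ∑ s ∈ (paths n m).filter (fun s => levelAt n s n = k), pathWeight n q s

/-- `q̃^{(n)}(k)`: enlarged probability of a net balance of `k` cumulative jumps at maturity. -/
def qtilde (n m : ℕ) (q : ℤ → ℝ) (k : ℤ) : ℝ :=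
  ∑ s ∈ (paths n m).filter (fun s => levelAt n s n = k), modWeight n q s

/-- `q^{k̄,(n)}(k)`: probability of a net balance of `k` jumps at maturity while reaching at
some time a net balance higher than `k̄`. -/
def qup (n m : ℕ) (q : ℤ → ℝ) (kbar : ℕ) (k : ℤ) : ℝ :=
  ∑ s ∈ (paths n m).filter
      (fun s => levelAt n s n = k ∧ ∃ t ≤ n, (kbar : ℤ) + 1 ≤ levelAt n s t),
    pathWeight n q s

/-- `q_{l̄}^{(n)}(k)`: probability of a net balance of `k` jumps at maturity while reaching at
some time a net balance lower than `-l̄`. -/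
def qdown (n m : ℕ) (q : ℤ → ℝ) (lbar : ℕ) (k : ℤ) : ℝ :=
  ∑ s ∈ (paths n m).filter
      (fun s => levelAt n s n = k ∧ ∃ t ≤ n, levelAt n s t ≤ -(lbar : ℤ) - 1),
    pathWeight n q s

/-- `q^{cut,(n)}(k)`: probability of reaching level `k` at maturity without ever leaving the
band `[-l̄, k̄]`. -/
def qcut (n m : ℕ) (q : ℤ → ℝ) (kbar lbar : ℕ) (k : ℤ) : ℝ :=
  ∑ s ∈ (paths n m).filter
      (fun s => levelAt n s n = k ∧
        ∀ t ≤ n, -(lbar : ℤ) ≤ levelAt n s t ∧ levelAt n s t ≤ (kbar : ℤ)),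
    pathWeight n q s

/-- `P(j) = C(n,j) p^j (1-p)^(n-j)`. -/
def binomP (n : ℕ) (p : ℝ) (j : ℕ) : ℝ :=
  (n.choose j : ℝ) * p ^ j * (1 - p) ^ (n - j)

/-- Put payoff at the terminal node `(n, j, k)`. -/
def putPayoff (n : ℕ) (S0 K σ dt h : ℝ) (j : ℕ) (k : ℤ) : ℝ :=
  max (K - S0 * Real.exp ((2 * (j : ℝ) - (n : ℝ)) * (σ * Real.sqrt dt) + h * (k : ℝ))) 0

/-- European put value `V` on the full tree. -/
def Vput (n m : ℕ) (q : ℤ → ℝ) (p S0 K σ τ h r : ℝ) : ℝ :=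
  Real.exp (-(r * τ)) *
    ∑ k ∈ Finset.Icc (-((m : ℤ) * n)) ((m : ℤ) * n), ∑ j ∈ Finset.range (n + 1),
      putPayoff n S0 K σ (τ / n) h j k * binomP n p j * qfull n m q k

/-- European put value `V^{TT}` on the truncated tree. -/
def VTT (n m : ℕ) (q : ℤ → ℝ) (p S0 K σ τ h r : ℝ) (kbar lbar : ℕ) : ℝ :=
  Real.exp (-(r * τ)) *
    ∑ k ∈ Finset.Icc (-(lbar : ℤ)) (kbar : ℤ), ∑ j ∈ Finset.range (n + 1),
      putPayoff n S0 K σ (τ / n) h j k * binomP n p j * qcut n m q kbar lbar k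

/-- The sequence `W_i`: `W₁ = w₁`, `W_{i+1} = w_{i+1} + W_i^{(i+1)/i}` (real powers). -/
def Wseq (w : ℕ → ℝ) : ℕ → ℝ
  | 0 => 0
  | 1 => w 1
  | (i + 2) => w (i + 2) + Wseq w (i + 1) ^ (((i : ℝ) + 2) / ((i : ℝ) + 1))

/-- `M_i = max { W_i, W_i^{(1-i)/i} }` (real powers). -/
def Mseq (w : ℕ → ℝ) (i : ℕ) : ℝ :=
  max (Wseq w i) (Wseq w i ^ ((1 - (i : ℝ)) / (i : ℝ)))

/-- `G = 2 m max{W_m, 1} e^{W_m} ∏_{i=1}^{m-1} M_i²`. -/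
def Gconst (w : ℕ → ℝ) (m : ℕ) : ℝ :=
  2 * m * max (Wseq w m) 1 * Real.exp (Wseq w m) * ∏ i ∈ Finset.Icc 1 (m - 1), (Mseq w i) ^ 2

/-- Value of the underlying at a node with (real) time index `i`, `j` up Brownian moves and
net jump level `l`. -/
def Sval (S0 σ dt h : ℝ) (i : ℝ) (j : ℕ) (l : ℤ) : ℝ :=
  S0 * Real.exp ((2 * (j : ℝ) - i) * (σ * Real.sqrt dt) + (l : ℝ) * h)

/-- Full backward European put price; `VEfull … d j l` is the value `V_E(n-d, j, l)`
(`d` = number of remaining steps). -/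
def VEfull (n m : ℕ) (q : ℤ → ℝ) (p dt S0 K σ h r : ℝ) : ℕ → ℕ → ℤ → ℝ
  | 0, j, l => max (K - Sval S0 σ dt h (n : ℝ) j l) 0
  | (d + 1), j, l =>
      Real.exp (-(r * dt)) *
        ∑ k ∈ Finset.Icc (-(m : ℤ)) (m : ℤ),
          (VEfull n m q p dt S0 K σ h r d (j + 1) (l + k) * p +
            VEfull n m q p dt S0 K σ h r d j (l + k) * (1 - p)) * q k

/-- Full backward American put price; `VAfull … d j l` is the value `V_A(n-d, j, l)`. -/
def VAfull (n m : ℕ) (q : ℤ → ℝ) (p dt S0 K σ h r : ℝ) : ℕ → ℕ → ℤ → ℝ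
  | 0, j, l => max (K - Sval S0 σ dt h (n : ℝ) j l) 0
  | (d + 1), j, l =>
      max
        (Real.exp (-(r * dt)) *
          ∑ k ∈ Finset.Icc (-(m : ℤ)) (m : ℤ),
            (VAfull n m q p dt S0 K σ h r d (j + 1) (l + k) * p +
              VAfull n m q p dt S0 K σ h r d j (l + k) * (1 - p)) * q k)
        (K - Sval S0 σ dt h ((n : ℝ) - (d + 1)) j l)

/-- Truncated backward European put price with boundary value `b`;
`VEtr … d j l` is the value `V_E^b(n-d, j, l)`. -/
def VEtr (n m : ℕ) (q : ℤ → ℝ) (p dt S0 K σ h r b : ℝ) (kbar lbar : ℕ) :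
    ℕ → ℕ → ℤ → ℝ
  | 0, j, l =>
      if -(lbar : ℤ) ≤ l ∧ l ≤ (kbar : ℤ) then max (K - Sval S0 σ dt h (n : ℝ) j l) 0 else b
  | (d + 1), j, l =>
      if -(lbar : ℤ) ≤ l ∧ l ≤ (kbar : ℤ) then
        Real.exp (-(r * dt)) *
          ∑ k ∈ Finset.Icc (-(m : ℤ)) (m : ℤ),
            (VEtr n m q p dt S0 K σ h r b kbar lbar d (j + 1) (l + k) * p +
              VEtr n m q p dt S0 K σ h r b kbar lbar d j (l + k) * (1 - p)) * q k
      else b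

/-- Truncated backward American put price with boundary value `b`;
`VAtr … d j l` is the value `V_A^b(n-d, j, l)`. -/
def VAtr (n m : ℕ) (q : ℤ → ℝ) (p dt S0 K σ h r b : ℝ) (kbar lbar : ℕ) :
    ℕ → ℕ → ℤ → ℝ
  | 0, j, l =>
      if -(lbar : ℤ) ≤ l ∧ l ≤ (kbar : ℤ) then max (K - Sval S0 σ dt h (n : ℝ) j l) 0 else b
  | (d + 1), j, l =>
      if -(lbar : ℤ) ≤ l ∧ l ≤ (kbar : ℤ) then
        max
          (Real.exp (-(r * dt)) *
            ∑ k ∈ Finset.Icc (-(m : ℤ)) (m : ℤ),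
              (VAtr n m q p dt S0 K σ h r b kbar lbar d (j + 1) (l + k) * p +
                VAtr n m q p dt S0 K σ h r b kbar lbar d j (l + k) * (1 - p)) * q k)
          (K - Sval S0 σ dt h ((n : ℝ) - (d + 1)) j l)
      else b

/-- The sum, over all jump-path prefixes that first exit the band `[-l̄, k̄]` at some time
`1 ≤ i ≤ n`, of the prefix probability times `b e^{-r i Δt}`. -/
def exitSum (n m : ℕ) (q : ℤ → ℝ) (r dt : ℝ) (kbar lbar : ℕ) (b : ℝ) : ℝ :=
  ∑ i ∈ Finset.Icc 1 n,
    ∑ y ∈ (paths i m).filter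
        (fun y =>
          (∀ t < i, -(lbar : ℤ) ≤ levelAt i y t ∧ levelAt i y t ≤ (kbar : ℤ)) ∧
          ¬(-(lbar : ℤ) ≤ levelAt i y i ∧ levelAt i y i ≤ (kbar : ℤ))),
      pathWeight i q y * (b * Real.exp (-(r * (i : ℝ) * dt)))

end HScut

open HScut

namespace HSproof

/-- First hitting time of level `c` (or `0` / junk if never hit). -/
def hitT (n : ℕ) (c : ℤ) (s : Fin n → ℤ) : ℕ := sInf {t | c ≤ levelAt n s t}

/-- Reflection of a path after its first hitting time of level `c`. -/
def reflMap (n : ℕ) (c : ℤ) (s : Fin n → ℤ) : Fin n → ℤ :=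
  fun i => if (i : ℕ) < hitT n c s then s i else -(s i)

variable {n : ℕ}

lemma mem_paths_iff {m : ℕ} {s : Fin n → ℤ} :
    s ∈ paths n m ↔ ∀ i, -(m : ℤ) ≤ s i ∧ s i ≤ (m : ℤ) := by
  simp [paths, Fintype.mem_piFinset, Finset.mem_Icc]

lemma levelAt_zero (s : Fin n → ℤ) : levelAt n s 0 = 0 := by
  simp [levelAt]

lemma levelAt_succ (s : Fin n → ℤ) (t : ℕ) (ht : t < n) :
    levelAt n s (t + 1) = levelAt n s t + s ⟨t, ht⟩ := by
  unfold levelAt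
  rw [show (Finset.univ.filter fun i : Fin n => (i : ℕ) < t + 1)
      = insert ⟨t, ht⟩ (Finset.univ.filter fun i : Fin n => (i : ℕ) < t) by
    ext i
    simp only [Finset.mem_filter, Finset.mem_insert, Finset.mem_univ, true_and, Fin.ext_iff]
    omega]
  rw [Finset.sum_insert (by simp)]
  ring

lemma levelAt_congr (s r : Fin n → ℤ) (t : ℕ)
    (h : ∀ i : Fin n, (i : ℕ) < t → s i = r i) : levelAt n s t = levelAt n r t :=
  Finset.sum_congr rfl fun i hi => h i (by simpa using hi)

lemma levelAt_top (s : Fin n → ℤ) : levelAt n s n = ∑ i, s i := by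
  unfold levelAt
  rw [Finset.filter_true_of_mem fun i _ => i.isLt]

lemma modWeight_nonneg {q : ℤ → ℝ} (hqm : 0 ≤ q (-1)) (hq0 : 0 ≤ q 0) (hqp : 0 ≤ q 1)
    {s : Fin n → ℤ} (hs : s ∈ paths n 1) : 0 ≤ modWeight n q s := by
  refine Finset.prod_nonneg fun i _ => ?_
  obtain ⟨h1, h2⟩ := mem_paths_iff.mp hs i
  have : s i = -1 ∨ s i = 0 ∨ s i = 1 := by omega
  rcases this with h | h | h
  · rw [h, if_neg (by norm_num)]; exact le_max_of_le_left hqm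
  · rw [h, if_pos rfl]; exact hq0
  · rw [h, if_neg (by norm_num)]; exact le_max_of_le_left hqp

lemma pathWeight_le_modWeight {q : ℤ → ℝ} (hqm : 0 ≤ q (-1)) (hq0 : 0 ≤ q 0) (hqp : 0 ≤ q 1)
    {s : Fin n → ℤ} (hs : s ∈ paths n 1) : pathWeight n q s ≤ modWeight n q s := by
  refine Finset.prod_le_prod (fun i _ => ?_) (fun i _ => ?_) <;>
    obtain ⟨h1, h2⟩ := mem_paths_iff.mp hs i <;>
    have h3 : s i = -1 ∨ s i = 0 ∨ s i = 1 := by omega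
  · rcases h3 with h | h | h <;> rw [h] <;> assumption
  · rcases h3 with h | h | h
    · rw [h, if_neg (by norm_num)]; exact le_max_left _ _
    · rw [h, if_pos rfl]
    · rw [h, if_neg (by norm_num)]; exact le_max_left _ _

lemma modWeight_reflMap {q : ℤ → ℝ} (c : ℤ) (s : Fin n → ℤ) :
    modWeight n q (reflMap n c s) = modWeight n q s := by
  refine Finset.prod_congr rfl fun i _ => ?_
  unfold reflMap
  by_cases h : (i : ℕ) < hitT n c s
  · simp [h]
  · by_cases h0 : s i = 0 <;> simp [h, h0, max_comm]

lemma reflMap_mem_paths {m : ℕ} (c : ℤ) {s : Fin n → ℤ} (hs : s ∈ paths n m) :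
    reflMap n c s ∈ paths n m := by
  rw [mem_paths_iff] at hs ⊢
  intro i
  obtain ⟨h1, h2⟩ := hs i
  unfold reflMap
  by_cases h : (i : ℕ) < hitT n c s <;> simp [h] <;> omega

section hit

variable {c : ℤ} {s : Fin n → ℤ}

lemma hitT_spec (hex : ∃ t, c ≤ levelAt n s t) : c ≤ levelAt n s (hitT n c s) :=
  Nat.sInf_mem hex

lemma hitT_le {t : ℕ} (ht : c ≤ levelAt n s t) : hitT n c s ≤ t := Nat.sInf_le ht

lemma hitT_min {t : ℕ} (ht : t < hitT n c s) : ¬ c ≤ levelAt n s t := by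
  intro h
  exact absurd (hitT_le h) (by omega)

lemma hitT_pos (hc : 1 ≤ c) (hex : ∃ t, c ≤ levelAt n s t) : 1 ≤ hitT n c s := by
  by_contra h
  have h0 : hitT n c s = 0 := by omega
  have := hitT_spec hex
  rw [h0, levelAt_zero] at this
  omega

lemma levelAt_hitT (hc : 1 ≤ c) (hs : s ∈ paths n 1)
    (hex : ∃ t ≤ n, c ≤ levelAt n s t) : levelAt n s (hitT n c s) = c := by
  obtain ⟨t0, ht0n, ht0⟩ := hex
  have hex' : ∃ t, c ≤ levelAt n s t := ⟨t0, ht0⟩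
  have hTn : hitT n c s ≤ n := le_trans (hitT_le ht0) ht0n
  have hT1 : 1 ≤ hitT n c s := hitT_pos hc hex'
  have hspec := hitT_spec hex'
  obtain ⟨T', hT'⟩ : ∃ T', hitT n c s = T' + 1 := ⟨hitT n c s - 1, by omega⟩
  have hT'n : T' < n := by omega
  have hprev : ¬ c ≤ levelAt n s T' := hitT_min (by omega)
  have hstep : s ⟨T', hT'n⟩ ≤ 1 := (mem_paths_iff.mp hs _).2
  have := levelAt_succ s T' hT'n
  rw [hT'] at hspec ⊢
  rw [this] at hspec ⊢
  omega

lemma hitT_reflMap (hex : ∃ t, c ≤ levelAt n s t) :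
    hitT n c (reflMap n c s) = hitT n c s := by
  set T := hitT n c s with hTdef
  have hpre : ∀ t ≤ T, levelAt n (reflMap n c s) t = levelAt n s t := by
    intro t ht
    refine levelAt_congr _ _ t fun i hi => ?_
    unfold reflMap
    rw [if_pos (by omega)]
  have hmem : c ≤ levelAt n (reflMap n c s) T := by
    rw [hpre T le_rfl]; exact hitT_spec hex
  have h1 : hitT n c (reflMap n c s) ≤ T := hitT_le hmem
  have h2 : T ≤ hitT n c (reflMap n c s) := by
    by_contra h
    push_neg at h
    have := hitT_spec (⟨T, hmem⟩ : ∃ t, c ≤ levelAt n (reflMap n c s) t)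
    rw [hpre _ (le_of_lt h)] at this
    have h' : hitT n c (reflMap n c s) < hitT n c s := by omega
    exact hitT_min h' this
  omega

lemma reflMap_involutive (hex : ∃ t, c ≤ levelAt n s t) :
    reflMap n c (reflMap n c s) = s := by
  funext i
  have e : reflMap n c (reflMap n c s) i
      = if (i : ℕ) < hitT n c (reflMap n c s) then reflMap n c s i
        else -(reflMap n c s i) := rfl
  rw [e, hitT_reflMap hex]
  unfold reflMap
  by_cases h : (i : ℕ) < hitT n c s <;> simp [h]

lemma levelAt_reflMap_top (hTn : hitT n c s ≤ n) :
    levelAt n (reflMap n c s) n = 2 * levelAt n s (hitT n c s) - levelAt n s n := by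
  set T := hitT n c s with hTdef
  rw [levelAt_top, levelAt_top]
  rw [← Finset.sum_filter_add_sum_filter_not Finset.univ (fun i : Fin n => (i : ℕ) < T)]
  have e1 : ∑ i ∈ Finset.univ.filter (fun i : Fin n => (i : ℕ) < T), reflMap n c s i
      = levelAt n s T := by
    refine Finset.sum_congr rfl fun i hi => ?_
    simp only [Finset.mem_filter] at hi
    unfold reflMap
    rw [if_pos hi.2]
  have e2 : ∑ i ∈ Finset.univ.filter (fun i : Fin n => ¬ (i : ℕ) < T), reflMap n c s i
      = -(∑ i, s i - levelAt n s T) := by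
    have := Finset.sum_filter_add_sum_filter_not Finset.univ
      (fun i : Fin n => (i : ℕ) < T) s
    have e3 : ∑ i ∈ Finset.univ.filter (fun i : Fin n => ¬ (i : ℕ) < T), reflMap n c s i
        = -∑ i ∈ Finset.univ.filter (fun i : Fin n => ¬ (i : ℕ) < T), s i := by
      rw [← Finset.sum_neg_distrib]
      refine Finset.sum_congr rfl fun i hi => ?_
      simp only [Finset.mem_filter] at hi
      unfold reflMap
      rw [if_neg hi.2]
    rw [e3]
    have e4 : levelAt n s T
        = ∑ i ∈ Finset.univ.filter (fun i : Fin n => (i : ℕ) < T), s i := rfl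
    omega
  rw [e1, e2]
  have e4 : levelAt n s n = ∑ i, s i := levelAt_top s
  omega

end hit

/-- Main reflection estimate for the upward exit. -/
lemma qup_le_qtilde (q : ℤ → ℝ)
    (hqm : 0 ≤ q (-1)) (hq0 : 0 ≤ q 0) (hqp : 0 ≤ q 1) (kbar : ℕ) (k : ℤ) :
    qup n 1 q kbar k ≤ qtilde n 1 q (2 * (kbar : ℤ) - k + 2) := by
  classical
  set c : ℤ := (kbar : ℤ) + 1 with hc
  have hc1 : 1 ≤ c := by omega
  set A := (paths n 1).filter
      (fun s => levelAt n s n = k ∧ ∃ t ≤ n, (kbar : ℤ) + 1 ≤ levelAt n s t) with hA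
  set B := (paths n 1).filter
      (fun s => levelAt n s n = 2 * (kbar : ℤ) - k + 2) with hB
  have hmemA : ∀ s ∈ A, s ∈ paths n 1 ∧ levelAt n s n = k ∧ ∃ t ≤ n, c ≤ levelAt n s t := by
    intro s hs
    rw [hA, Finset.mem_filter] at hs
    exact ⟨hs.1, hs.2.1, hs.2.2⟩
  have step1 : qup n 1 q kbar k ≤ ∑ s ∈ A, modWeight n q (reflMap n c s) := by
    unfold qup
    refine Finset.sum_le_sum fun s hs => ?_
    obtain ⟨hp, _, _⟩ := hmemA s hs
    rw [modWeight_reflMap]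
    exact pathWeight_le_modWeight hqm hq0 hqp hp
  have hinj : Set.InjOn (reflMap n c) ↑A := by
    intro s₁ h₁ s₂ h₂ heq
    obtain ⟨_, _, t₁, _, ht₁⟩ := hmemA s₁ h₁
    obtain ⟨_, _, t₂, _, ht₂⟩ := hmemA s₂ h₂
    have := reflMap_involutive (s := s₁) ⟨t₁, ht₁⟩
    rw [← this, heq, reflMap_involutive (s := s₂) ⟨t₂, ht₂⟩]
  have step2 : ∑ s ∈ A, modWeight n q (reflMap n c s)
      = ∑ s ∈ A.image (reflMap n c), modWeight n q s :=
    (Finset.sum_image fun s hs r hr h => hinj hs hr h).symm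
  have hsub : A.image (reflMap n c) ⊆ B := by
    intro r hr
    rw [Finset.mem_image] at hr
    obtain ⟨s, hs, rfl⟩ := hr
    obtain ⟨hp, hk, t0, ht0n, ht0⟩ := hmemA s hs
    have hTn : hitT n c s ≤ n := le_trans (hitT_le ht0) ht0n
    rw [hB, Finset.mem_filter]
    refine ⟨reflMap_mem_paths c hp, ?_⟩
    rw [levelAt_reflMap_top hTn, levelAt_hitT hc1 hp ⟨t0, ht0n, ht0⟩, hk, hc]
    ring
  have step3 : ∑ s ∈ A.image (reflMap n c), modWeight n q s
      ≤ qtilde n 1 q (2 * (kbar : ℤ) - k + 2) := by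
    unfold qtilde
    have hsub' : A.image (reflMap n c) ⊆
        (paths n 1).filter (fun s => levelAt n s n = 2 * (kbar : ℤ) - k + 2) := by
      rw [← hB]; exact hsub
    refine Finset.sum_le_sum_of_subset_of_nonneg hsub' fun r hr _ => ?_
    rw [Finset.mem_filter] at hr
    exact modWeight_nonneg hqm hq0 hqp hr.1
  calc qup n 1 q kbar k ≤ ∑ s ∈ A, modWeight n q (reflMap n c s) := step1
    _ = ∑ s ∈ A.image (reflMap n c), modWeight n q s := step2
    _ ≤ qtilde n 1 q (2 * (kbar : ℤ) - k + 2) := step3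

lemma levelAt_neg (s : Fin n → ℤ) (t : ℕ) :
    levelAt n (fun i => -(s i)) t = -levelAt n s t := by
  unfold levelAt
  rw [← Finset.sum_neg_distrib]

lemma qdown_eq_qup (q : ℤ → ℝ) (lbar : ℕ) (k : ℤ) :
    qdown n 1 q lbar k = qup n 1 (fun j => q (-j)) lbar (-k) := by
  classical
  unfold qdown qup
  refine Finset.sum_nbij' (fun s => fun i => -(s i)) (fun s => fun i => -(s i))
    ?_ ?_ ?_ ?_ ?_
  · intro s hs
    simp only [Finset.mem_filter] at hs ⊢
    obtain ⟨hp, hk, t, htn, ht⟩ := hs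
    refine ⟨?_, ?_, t, htn, ?_⟩
    · simp only [paths, Fintype.mem_piFinset, Finset.mem_Icc] at hp ⊢
      intro i; obtain ⟨h1, h2⟩ := hp i; constructor <;> omega
    · simp only [levelAt_neg, hk]
    · simp only [levelAt_neg]; omega
  · intro s hs
    simp only [Finset.mem_filter] at hs ⊢
    obtain ⟨hp, hk, t, htn, ht⟩ := hs
    refine ⟨?_, ?_, t, htn, ?_⟩
    · simp only [paths, Fintype.mem_piFinset, Finset.mem_Icc] at hp ⊢
      intro i; obtain ⟨h1, h2⟩ := hp i; constructor <;> omega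
    · simp only [levelAt_neg, hk]; ring
    · simp only [levelAt_neg]; omega
  · intro s _; funext i; simp
  · intro s _; funext i; simp
  · intro s _; simp [pathWeight]

lemma qtilde_negq (q : ℤ → ℝ) (M : ℤ) :
    qtilde n 1 (fun j => q (-j)) M = qtilde n 1 q M := by
  unfold qtilde
  refine Finset.sum_congr rfl fun s _ => ?_
  unfold modWeight
  refine Finset.prod_congr rfl fun i _ => ?_
  by_cases h : s i = 0
  · simp [h]
  · rw [if_neg h, if_neg h]
    show max (q (-s i)) (q (-(-s i))) = max (q (s i)) (q (-s i))
    rw [neg_neg, max_comm]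

end HSproof

open HSproof

/-- Reflection bound (m = 1): `q^{k̄,(n)}(k) ≤ q̃^{(n)}(2k̄ − k + 2)` and
`q_{l̄}^{(n)}(k) ≤ q̃^{(n)}(2l̄ + k + 2)` for all `−l̄ ≤ k ≤ k̄`. -/
theorem reflection_bound_one (n : ℕ) (hn : 1 ≤ n) (q : ℤ → ℝ)
    (hqm : 0 ≤ q (-1)) (hq0 : 0 ≤ q 0) (hqp : 0 ≤ q 1)
    (hsum : q (-1) + q 0 + q 1 = 1)
    (kbar lbar : ℕ) (k : ℤ) (hkl : -(lbar : ℤ) ≤ k) (hkk : k ≤ (kbar : ℤ)) :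
    qup n 1 q kbar k ≤ qtilde n 1 q (2 * (kbar : ℤ) - k + 2) ∧
    qdown n 1 q lbar k ≤ qtilde n 1 q (2 * (lbar : ℤ) + k + 2) := by
  constructor
  · exact qup_le_qtilde q hqm hq0 hqp kbar k
  · have h1 : qdown n 1 q lbar k = qup n 1 (fun j => q (-j)) lbar (-k) :=
      qdown_eq_qup q lbar k
    have h2 : qup n 1 (fun j => q (-j)) lbar (-k)
        ≤ qtilde n 1 (fun j => q (-j)) (2 * (lbar : ℤ) - (-k) + 2) :=
      qup_le_qtilde (fun j => q (-j)) (by simpa using hqp) (by simpa using hq0)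
        (by simpa using hqm) lbar (-k)
    have h3 : (2 * (lbar : ℤ) - (-k) + 2) = 2 * (lbar : ℤ) + k + 2 := by ring
    rw [h1]
    calc qup n 1 (fun j => q (-j)) lbar (-k)
        ≤ qtilde n 1 (fun j => q (-j)) (2 * (lbar : ℤ) + k + 2) := by rw [← h3]; exact h2
      _ = qtilde n 1 q (2 * (lbar : ℤ) + k + 2) := qtilde_negq q _
end
end

section
/- For every integer k with 2w − 1 ≤ k ≤ n one has q̃^{(n)}(k) ≤ 2·e^{w}·w^{k}/k!. -/
open Finset

open scoped Classical

noncomputable section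

open HScut

section AuxHS

open Finset

/-- Set of up-steps of a path. -/
def upSet (n : ℕ) (s : Fin n → ℤ) : Finset (Fin n) := Finset.univ.filter (fun i => s i = 1)

/-- Set of down-steps of a path. -/
def dnSet (n : ℕ) (s : Fin n → ℤ) : Finset (Fin n) := Finset.univ.filter (fun i => s i = -1)

lemma mem_paths_one {n : ℕ} {s : Fin n → ℤ} (hs : s ∈ paths n 1) (i : Fin n) :
    s i = -1 ∨ s i = 0 ∨ s i = 1 := by
  simp only [paths, Fintype.mem_piFinset, Finset.mem_Icc] at hs
  have := hs i; omega

lemma levelAt_full {n : ℕ} (s : Fin n → ℤ) : levelAt n s n = ∑ i, s i := by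
  unfold levelAt
  congr 1
  exact Finset.filter_true_of_mem (fun i _ => i.isLt)

lemma sum_eq_card {n : ℕ} {s : Fin n → ℤ} (hs : s ∈ paths n 1) :
    ∑ i, s i = ((upSet n s).card : ℤ) - ((dnSet n s).card : ℤ) := by
  have h : ∀ i : Fin n, s i = (if s i = 1 then (1:ℤ) else 0) - (if s i = -1 then (1:ℤ) else 0) := by
    intro i; rcases mem_paths_one hs i with h|h|h <;> simp [h]
  rw [Finset.sum_congr rfl (fun i _ => h i), Finset.sum_sub_distrib]
  simp [upSet, dnSet, Finset.sum_boole]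

lemma card_nz {n : ℕ} {s : Fin n → ℤ} (hs : s ∈ paths n 1) :
    (Finset.univ.filter (fun i => ¬ s i = 0)).card = (upSet n s).card + (dnSet n s).card := by
  have h : Finset.univ.filter (fun i : Fin n => ¬ s i = 0) = upSet n s ∪ dnSet n s := by
    ext i
    simp only [Finset.mem_filter, Finset.mem_union, upSet, dnSet, Finset.mem_univ, true_and]
    rcases mem_paths_one hs i with h|h|h <;> simp [h]
  rw [h, Finset.card_union_of_disjoint]
  rw [Finset.disjoint_left]
  intro i hi1 hi2
  simp only [upSet, dnSet, Finset.mem_filter, Finset.mem_univ, true_and] at hi1 hi2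
  omega

lemma modWeight_le {n : ℕ} {q : ℤ → ℝ} (hq0 : 0 ≤ q 0) (hq01 : q 0 ≤ 1)
    {s : Fin n → ℤ} (hs : s ∈ paths n 1) {r : ℝ} (hr : r = max (q 1) (q (-1))) (hr0 : 0 ≤ r) :
    modWeight n q s ≤ r ^ (Finset.univ.filter (fun i => ¬ s i = 0)).card := by
  unfold modWeight
  calc ∏ i, (if s i = 0 then q 0 else max (q (s i)) (q (-s i)))
      ≤ ∏ i, (if s i = 0 then 1 else r) := by
        apply Finset.prod_le_prod
        · intro i _
          rcases mem_paths_one hs i with h|h|h <;> rw [h]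
          · rw [if_neg (by norm_num : ¬(-1:ℤ) = 0)]
            simp only [neg_neg]
            rw [max_comm, ← hr]; exact hr0
          · rw [if_pos rfl]; exact hq0
          · rw [if_neg (by norm_num : ¬(1:ℤ) = 0)]
            rw [← hr]; exact hr0
        · intro i _
          rcases mem_paths_one hs i with h|h|h <;> rw [h]
          · rw [if_neg (by norm_num : ¬(-1:ℤ) = 0), if_neg (by norm_num : ¬(-1:ℤ) = 0)]
            simp only [neg_neg]
            rw [max_comm, ← hr]
          · rw [if_pos rfl, if_pos rfl]; exact hq01
          · rw [if_neg (by norm_num : ¬(1:ℤ) = 0), if_neg (by norm_num : ¬(1:ℤ) = 0)]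
            rw [← hr]
    _ = r ^ (Finset.univ.filter (fun i => ¬ s i = 0)).card := by
        rw [Finset.prod_ite, Finset.prod_const_one, one_mul, Finset.prod_const]

lemma fiber_card_le (n k b : ℕ) :
    ((paths n 1).filter (fun s => levelAt n s n = (k:ℤ) ∧ (dnSet n s).card = b)).card
      ≤ n.choose (k+b) * n.choose b := by
  have h : ((paths n 1).filter (fun s => levelAt n s n = (k:ℤ) ∧ (dnSet n s).card = b)).card
      ≤ ((Finset.univ : Finset (Fin n)).powersetCard (k+b) ×ˢ
          (Finset.univ : Finset (Fin n)).powersetCard b).card := by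
    apply Finset.card_le_card_of_injOn (fun s => (upSet n s, dnSet n s))
    · intro s hs
      simp only [Finset.mem_coe, Finset.mem_filter] at hs
      obtain ⟨hsp, hlev, hdb⟩ := hs
      rw [levelAt_full, sum_eq_card hsp] at hlev
      have ha : (upSet n s).card = k + b := by omega
      simp [Finset.mem_product, Finset.mem_powersetCard_univ, ha, hdb]
    · intro s1 h1 s2 h2 heq
      simp only [Finset.coe_filter, Set.mem_setOf_eq, Finset.mem_filter] at h1 h2
      have e1 : upSet n s1 = upSet n s2 := congrArg Prod.fst heq
      have e2 : dnSet n s1 = dnSet n s2 := congrArg Prod.snd heq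
      funext i
      have m1 := mem_paths_one h1.1 i
      have m2 := mem_paths_one h2.1 i
      have hu := Finset.ext_iff.mp e1 i
      have hd := Finset.ext_iff.mp e2 i
      simp only [upSet, dnSet, Finset.mem_filter, Finset.mem_univ, true_and] at hu hd
      omega
  calc _ ≤ _ := h
    _ = n.choose (k+b) * n.choose b := by
        simp [Finset.card_product, Finset.card_powersetCard, Finset.card_univ]

lemma choose_le_pow_real (n a : ℕ) : (n.choose a : ℝ) * (a.factorial : ℝ) ≤ (n:ℝ)^a := by
  have h : a.factorial * n.choose a ≤ n ^ a := by
    rw [← Nat.descFactorial_eq_factorial_mul_choose]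
    exact Nat.descFactorial_le_pow n a
  calc (n.choose a : ℝ) * (a.factorial : ℝ) = ((a.factorial * n.choose a : ℕ) : ℝ) := by
        push_cast; ring
    _ ≤ ((n^a : ℕ) : ℝ) := by exact_mod_cast h
    _ = (n:ℝ)^a := by push_cast; ring

lemma fact_growth (k : ℕ) (w : ℝ) (hw0 : 0 ≤ w) (hkw : 2*w ≤ (k:ℝ)+1) :
    ∀ b : ℕ, (2*w)^b * (k.factorial : ℝ) ≤ ((k+b).factorial : ℝ)
  | 0 => by simp
  | (b+1) => by
    have ih := fact_growth k w hw0 hkw b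
    have h1 : (2*w)^(b+1) * (k.factorial : ℝ) = (2*w) * ((2*w)^b * k.factorial) := by ring
    have h2 : (2*w) * ((2*w)^b * (k.factorial:ℝ)) ≤ (2*w) * (k+b).factorial :=
      mul_le_mul_of_nonneg_left ih (by linarith)
    have h3 : (2*w) * (((k+b).factorial:ℝ)) ≤ ((k:ℝ)+b+1) * (k+b).factorial := by
      apply mul_le_mul_of_nonneg_right (by push_cast; linarith) (by positivity)
    have h4 : ((k+(b+1)).factorial : ℝ) = ((k:ℝ)+b+1) * ((k+b).factorial : ℝ) := by
      rw [show k+(b+1) = (k+b)+1 by ring, Nat.factorial_succ]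
      push_cast; ring
    rw [h1, h4]
    linarith

lemma term_bound (n k b : ℕ) (hn : 1 ≤ n) (w : ℝ) (hw0 : 0 ≤ w) (hkw : 2*w ≤ (k:ℝ)+1) :
    (n.choose (k+b) : ℝ) * (n.choose b : ℝ) * (w/(n:ℝ))^(k+2*b)
      ≤ (w^k / (k.factorial : ℝ)) * ((w/2)^b / (b.factorial : ℝ)) := by
  have hN : (0:ℝ) < n := by exact_mod_cast Nat.lt_of_lt_of_le Nat.zero_lt_one hn
  have hA : (0:ℝ) < ((k+b).factorial : ℝ) := by exact_mod_cast Nat.factorial_pos (k+b)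
  have hB : (0:ℝ) < (b.factorial : ℝ) := by exact_mod_cast Nat.factorial_pos b
  have hK : (0:ℝ) < (k.factorial : ℝ) := by exact_mod_cast Nat.factorial_pos k
  have hc1 : (n.choose (k+b):ℝ) ≤ (n:ℝ)^(k+b) / ((k+b).factorial : ℝ) := by
    rw [le_div_iff₀ hA]; exact choose_le_pow_real n (k+b)
  have hc2 : (n.choose b:ℝ) ≤ (n:ℝ)^b / (b.factorial : ℝ) := by
    rw [le_div_iff₀ hB]; exact choose_le_pow_real n b
  have step1 : (n.choose (k+b) : ℝ) * (n.choose b : ℝ) * (w/(n:ℝ))^(k+2*b)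
      ≤ ((n:ℝ)^(k+b)/((k+b).factorial:ℝ)) * ((n:ℝ)^b/(b.factorial:ℝ)) * (w/(n:ℝ))^(k+2*b) := by
    have h0 : (0:ℝ) ≤ (w/(n:ℝ))^(k+2*b) := by positivity
    apply mul_le_mul_of_nonneg_right _ h0
    apply mul_le_mul hc1 hc2 (by positivity) (by positivity)
  have step2 : ((n:ℝ)^(k+b)/((k+b).factorial:ℝ)) * ((n:ℝ)^b/(b.factorial:ℝ)) * (w/(n:ℝ))^(k+2*b)
      = w^(k+2*b) / (((k+b).factorial:ℝ) * (b.factorial:ℝ)) := by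
    rw [div_pow]
    rw [show (n:ℝ)^(k+2*b) = (n:ℝ)^(k+b) * (n:ℝ)^b by rw [← pow_add]; ring_nf]
    field_simp
  have hfact := fact_growth k w hw0 hkw b
  have step3 : w^(k+2*b) / (((k+b).factorial:ℝ) * (b.factorial:ℝ))
      ≤ (w^k / (k.factorial:ℝ)) * ((w/2)^b / (b.factorial:ℝ)) := by
    have h2b : (0:ℝ) < 2^b := by positivity
    have hrhs : (w^k/(k.factorial:ℝ)) * ((w/2)^b/(b.factorial:ℝ))
        = (w^k * w^b) / ((k.factorial:ℝ) * (2^b * (b.factorial:ℝ))) := by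
      rw [div_pow, div_div, div_mul_div_comm]
    rw [hrhs, div_le_div_iff₀ (by positivity) (by positivity)]
    have hpow : w^(k+2*b) = w^k * w^b * w^b := by
      rw [show k+2*b = k+b+b by ring, pow_add, pow_add]
    rw [hpow]
    rw [mul_pow] at hfact
    have hc : (0:ℝ) ≤ w^k * w^b * (b.factorial:ℝ) := by positivity
    nlinarith [mul_le_mul_of_nonneg_left hfact hc]
  calc _ ≤ _ := step1
    _ = _ := step2
    _ ≤ _ := step3

end AuxHS


/-- For every integer `k` with `2w − 1 ≤ k ≤ n` one has `q̃^{(n)}(k) ≤ 2 e^w w^k / k!`. -/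
theorem qtilde_pointwise_bound (n : ℕ) (hn : 1 ≤ n) (q : ℤ → ℝ)
    (hqm : 0 ≤ q (-1)) (hq0 : 0 ≤ q 0) (hqp : 0 ≤ q 1)
    (hsum : q (-1) + q 0 + q 1 = 1)
    (w : ℝ) (hw : w = (n : ℝ) * max (q 1) (q (-1)))
    (k : ℕ) (hk1 : 2 * w - 1 ≤ (k : ℝ)) (hk2 : k ≤ n) :
    qtilde n 1 q (k : ℤ) ≤ 2 * Real.exp w * w ^ k / (Nat.factorial k : ℝ) := by
  classical
  have hr0 : (0:ℝ) ≤ max (q 1) (q (-1)) := le_trans hqp (le_max_left _ _)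
  have hw0 : 0 ≤ w := by rw [hw]; positivity
  have hN : (0:ℝ) < n := by exact_mod_cast Nat.lt_of_lt_of_le Nat.zero_lt_one hn
  have hrw : max (q 1) (q (-1)) = w / (n:ℝ) := by rw [hw]; field_simp
  have hq01 : q 0 ≤ 1 := by linarith
  have hkw : 2*w ≤ (k:ℝ)+1 := by linarith
  set r : ℝ := max (q 1) (q (-1)) with hr
  set P := (paths n 1).filter (fun s => levelAt n s n = (k:ℤ)) with hP
  -- Step 1: pointwise bound on modified weights
  have step1 : qtilde n 1 q (k:ℤ) ≤ ∑ s ∈ P, r ^ (k + 2 * (dnSet n s).card) := by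
    unfold qtilde
    apply Finset.sum_le_sum
    intro s hs
    rw [Finset.mem_filter] at hs
    obtain ⟨hsp, hlev⟩ := hs
    have hb := modWeight_le hq0 hq01 hsp hr hr0
    have hcard : (Finset.univ.filter (fun i => ¬ s i = 0)).card = k + 2 * (dnSet n s).card := by
      rw [card_nz hsp]
      rw [levelAt_full, sum_eq_card hsp] at hlev
      omega
    rw [hcard] at hb
    exact hb
  -- Step 2: fiber decomposition over the number of down-steps
  have hmaps : ∀ s ∈ P, (dnSet n s).card ∈ Finset.range (n+1) := by
    intro s _
    rw [Finset.mem_range]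
    have h := Finset.card_le_univ (dnSet n s)
    rw [Fintype.card_fin] at h
    omega
  have step2 : ∑ s ∈ P, r ^ (k + 2 * (dnSet n s).card)
      = ∑ b ∈ Finset.range (n+1),
          ((P.filter (fun s => (dnSet n s).card = b)).card : ℝ) * r ^ (k + 2*b) := by
    rw [← Finset.sum_fiberwise_of_maps_to hmaps (fun s => r ^ (k + 2 * (dnSet n s).card))]
    apply Finset.sum_congr rfl
    intro b _
    have hcongr : ∑ s ∈ P.filter (fun s => (dnSet n s).card = b), r ^ (k + 2 * (dnSet n s).card)
        = ∑ _s ∈ P.filter (fun s => (dnSet n s).card = b), r ^ (k + 2 * b) := by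
      apply Finset.sum_congr rfl
      intro s hs
      rw [Finset.mem_filter] at hs
      rw [hs.2]
    rw [hcongr, Finset.sum_const, nsmul_eq_mul]
  -- Step 3: count the fibers
  have step3 : ∀ b ∈ Finset.range (n+1),
      ((P.filter (fun s => (dnSet n s).card = b)).card : ℝ) * r ^ (k + 2*b)
        ≤ (w^k / (k.factorial : ℝ)) * ((w/2)^b / (b.factorial : ℝ)) := by
    intro b _
    have hcard : (P.filter (fun s => (dnSet n s).card = b)).card
        ≤ n.choose (k+b) * n.choose b := by
      rw [hP, Finset.filter_filter]
      exact fiber_card_le n k b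
    have h1 : ((P.filter (fun s => (dnSet n s).card = b)).card : ℝ) * r ^ (k + 2*b)
        ≤ ((n.choose (k+b) * n.choose b : ℕ) : ℝ) * r ^ (k + 2*b) := by
      apply mul_le_mul_of_nonneg_right _ (by positivity)
      exact_mod_cast hcard
    refine le_trans h1 ?_
    rw [hrw]
    push_cast
    exact term_bound n k b hn w hw0 hkw
  -- Step 4: sum the bound
  have step4 : ∑ b ∈ Finset.range (n+1), (w^k / (k.factorial : ℝ)) * ((w/2)^b / (b.factorial : ℝ))
      ≤ 2 * Real.exp w * w ^ k / (k.factorial : ℝ) := by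
    rw [← Finset.mul_sum]
    have hs : ∑ b ∈ Finset.range (n+1), (w/2)^b / (b.factorial : ℝ) ≤ Real.exp (w/2) :=
      Real.sum_le_exp_of_nonneg (by positivity) (n+1)
    have he : Real.exp (w/2) ≤ 2 * Real.exp w := by
      have := Real.exp_le_exp.mpr (show w/2 ≤ w by linarith)
      have hp := Real.exp_pos w
      linarith
    calc (w^k / (k.factorial : ℝ)) * ∑ b ∈ Finset.range (n+1), (w/2)^b / (b.factorial : ℝ)
        ≤ (w^k / (k.factorial : ℝ)) * (2 * Real.exp w) := by
          apply mul_le_mul_of_nonneg_left (le_trans hs he) (by positivity)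
      _ = 2 * Real.exp w * w ^ k / (k.factorial : ℝ) := by ring
  calc qtilde n 1 q (k:ℤ) ≤ _ := step1
    _ = _ := step2
    _ ≤ _ := Finset.sum_le_sum step3
    _ ≤ _ := step4
end
end

section
/- For every integer k̄ with 2w − 1 ≤ k̄ ≤ n one has ∑_{k=k̄}^{n} q̃^{(n)}(k) ≤ 4·e^{w}·w^{k̄}/k̄!. -/
open Finset

open scoped Classical

noncomputable section

open HScut

/-- For every integer `k̄` with `2w − 1 ≤ k̄ ≤ n` one has
`∑_{k=k̄}^{n} q̃^{(n)}(k) ≤ 4 e^w w^{k̄} / k̄!`. -/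
theorem qtilde_tail_sum_bound (n : ℕ) (hn : 1 ≤ n) (q : ℤ → ℝ)
    (hqm : 0 ≤ q (-1)) (hq0 : 0 ≤ q 0) (hqp : 0 ≤ q 1)
    (hsum : q (-1) + q 0 + q 1 = 1)
    (w : ℝ) (hw : w = (n : ℝ) * max (q 1) (q (-1)))
    (kbar : ℕ) (hk1 : 2 * w - 1 ≤ (kbar : ℝ)) (hk2 : kbar ≤ n) :
    (∑ k ∈ Finset.Icc kbar n, qtilde n 1 q (k : ℤ)) ≤
      4 * Real.exp w * w ^ kbar / (Nat.factorial kbar : ℝ) := by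
  classical
  set W := max (q 1) (q (-1)) with hWdef
  have hW0 : 0 ≤ W := le_max_of_le_left hqp
  have hn0 : (0:ℝ) < (n:ℝ) := by exact_mod_cast hn
  have hw0 : 0 ≤ w := by rw [hw]; positivity
  set g : ℤ → ℝ := fun x => if x = 0 then q 0 else max (q x) (q (-x)) with hg
  have hg1 : g 1 = W := by simp [hg, hWdef]
  have hgm1 : g (-1) = W := by simp [hg, hWdef, max_comm]
  have hg00 : g 0 = q 0 := by simp [hg]
  have hgnn : ∀ x ∈ Finset.Icc (-1:ℤ) 1, 0 ≤ g x := by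
    intro x hx
    simp only [Finset.mem_Icc] at hx
    obtain ⟨hx1, hx2⟩ := hx
    interval_cases x
    · rw [hgm1]; exact hW0
    · rw [hg00]; exact hq0
    · rw [hg1]; exact hW0
  have hmw : ∀ s : Fin n → ℤ, modWeight n q s = ∏ i, g (s i) := fun s => rfl
  have hmwnn : ∀ s ∈ paths n 1, 0 ≤ modWeight n q s := by
    intro s hs
    rw [hmw]
    refine Finset.prod_nonneg fun i _ => hgnn _ ?_
    have := (Fintype.mem_piFinset).1 hs i
    simpa using this
  -- the up-set of a path
  set U : (Fin n → ℤ) → Finset (Fin n) := fun s => Finset.univ.filter (fun i => s i = 1)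
    with hU
  have hlevel : ∀ s : Fin n → ℤ, levelAt n s n = ∑ i, s i := by
    intro s
    unfold levelAt
    congr 1
    exact Finset.filter_true_of_mem fun i _ => i.isLt
  have hlev_le : ∀ s ∈ paths n 1, levelAt n s n ≤ ((U s).card : ℤ) := by
    intro s hs
    rw [hlevel]
    calc ∑ i, s i ≤ ∑ i, (if s i = 1 then (1:ℤ) else 0) := by
          refine Finset.sum_le_sum fun i _ => ?_
          have h1 := (Fintype.mem_piFinset).1 hs i
          simp only [Finset.mem_Icc] at h1
          by_cases h : s i = 1
          · simp [h]
          · simp only [h, if_false]; omega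
      _ = ((U s).card : ℤ) := by rw [Finset.sum_boole]
  -- Step 1: combine the sum over k into a single sum over paths
  have hdisj : (↑(Finset.Icc kbar n) : Set ℕ).PairwiseDisjoint
      (fun k => (paths n 1).filter (fun s => levelAt n s n = (k:ℤ))) := by
    intro a _ b _ hab
    refine Finset.disjoint_left.2 fun s hsa hsb => ?_
    have ha := (Finset.mem_filter.1 hsa).2
    have hb := (Finset.mem_filter.1 hsb).2
    exact hab (by exact_mod_cast ha.symm.trans hb)
  have hstep1 : (∑ k ∈ Finset.Icc kbar n, qtilde n 1 q (k : ℤ)) =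
      ∑ s ∈ (Finset.Icc kbar n).biUnion
        (fun k => (paths n 1).filter (fun s => levelAt n s n = (k:ℤ))),
        modWeight n q s := (Finset.sum_biUnion hdisj).symm
  -- Step 2: the union is contained in paths with at least kbar up-jumps
  have hsub : (Finset.Icc kbar n).biUnion
      (fun k => (paths n 1).filter (fun s => levelAt n s n = (k:ℤ))) ⊆
      (paths n 1).filter (fun s => kbar ≤ (U s).card) := by
    intro s hs
    obtain ⟨k, hk, hsk⟩ := Finset.mem_biUnion.1 hs
    obtain ⟨hsp, hlev⟩ := Finset.mem_filter.1 hsk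
    refine Finset.mem_filter.2 ⟨hsp, ?_⟩
    have h1 : (kbar:ℤ) ≤ (k:ℤ) := by exact_mod_cast (Finset.mem_Icc.1 hk).1
    have h2 := hlev_le s hsp
    rw [hlev] at h2
    exact_mod_cast h1.trans h2
  have hstep2 : (∑ k ∈ Finset.Icc kbar n, qtilde n 1 q (k : ℤ)) ≤
      ∑ s ∈ (paths n 1).filter (fun s => kbar ≤ (U s).card), modWeight n q s := by
    rw [hstep1]
    refine Finset.sum_le_sum_of_subset_of_nonneg hsub fun s hs _ => ?_
    exact hmwnn s (Finset.mem_filter.1 hs).1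
  -- Step 3: insert the binomial-coefficient factor
  have hstep3 : (∑ s ∈ (paths n 1).filter (fun s => kbar ≤ (U s).card), modWeight n q s) ≤
      ∑ s ∈ paths n 1, ((U s).card.choose kbar : ℝ) * modWeight n q s := by
    calc (∑ s ∈ (paths n 1).filter (fun s => kbar ≤ (U s).card), modWeight n q s)
        ≤ ∑ s ∈ (paths n 1).filter (fun s => kbar ≤ (U s).card),
            ((U s).card.choose kbar : ℝ) * modWeight n q s := by
          refine Finset.sum_le_sum fun s hs => ?_
          obtain ⟨hsp, hcard⟩ := Finset.mem_filter.1 hs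
          have h1 : (1:ℝ) ≤ ((U s).card.choose kbar : ℝ) := by
            exact_mod_cast Nat.one_le_iff_ne_zero.2 (Nat.choose_pos hcard).ne'
          exact le_mul_of_one_le_left (hmwnn s hsp) h1
      _ ≤ ∑ s ∈ paths n 1, ((U s).card.choose kbar : ℝ) * modWeight n q s := by
          refine Finset.sum_le_sum_of_subset_of_nonneg (Finset.filter_subset _ _)
            fun s hs _ => ?_
          exact mul_nonneg (by positivity) (hmwnn s hs)
  -- Step 4: expand the binomial coefficient as a sum over kbar-subsets and swap sums
  have hchoose : ∀ s : Fin n → ℤ, ((U s).card.choose kbar : ℝ) =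
      ∑ A ∈ Finset.powersetCard kbar (Finset.univ : Finset (Fin n)),
        (if A ⊆ U s then (1:ℝ) else 0) := by
    intro s
    rw [← Finset.sum_filter]
    have : (Finset.powersetCard kbar (Finset.univ : Finset (Fin n))).filter
        (fun A => A ⊆ U s) = Finset.powersetCard kbar (U s) := by
      ext A
      simp only [Finset.mem_filter, Finset.mem_powersetCard, Finset.subset_univ, true_and]
      tauto
    rw [this]
    simp [Finset.card_powersetCard]
  have hstep4 : (∑ s ∈ paths n 1, ((U s).card.choose kbar : ℝ) * modWeight n q s) =
      ∑ A ∈ Finset.powersetCard kbar (Finset.univ : Finset (Fin n)),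
        ∑ s ∈ (paths n 1).filter (fun s => A ⊆ U s), modWeight n q s := by
    simp_rw [hchoose, Finset.sum_mul, ite_mul, one_mul, zero_mul]
    rw [Finset.sum_comm]
    refine Finset.sum_congr rfl fun A _ => ?_
    rw [Finset.sum_filter]
  -- Step 5: compute the inner sum for a fixed kbar-subset A
  have hstep5 : ∀ A ∈ Finset.powersetCard kbar (Finset.univ : Finset (Fin n)),
      (∑ s ∈ (paths n 1).filter (fun s => A ⊆ U s), modWeight n q s) =
        W ^ kbar * (q 0 + 2 * W) ^ (n - kbar) := by
    intro A hA
    have hAcard : A.card = kbar := (Finset.mem_powersetCard.1 hA).2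
    have hset : (paths n 1).filter (fun s => A ⊆ U s) =
        Fintype.piFinset (fun i => if i ∈ A then ({1} : Finset ℤ)
          else Finset.Icc (-1:ℤ) 1) := by
      ext s
      simp only [Finset.mem_filter, paths, Fintype.mem_piFinset, hU, Finset.subset_iff,
        Finset.mem_filter, Finset.mem_univ, true_and]
      constructor
      · rintro ⟨h1, h2⟩ i
        by_cases hi : i ∈ A
        · simp [hi, h2 hi]
        · simpa [hi] using h1 i
      · intro h
        constructor
        · intro i
          have := h i
          by_cases hi : i ∈ A
          · simp only [hi, if_true, Finset.mem_singleton] at this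
            simp [this]
          · simpa [hi] using this
        · intro i hi
          have := h i
          simp only [hi, if_true, Finset.mem_singleton] at this
          exact this
    rw [hset]
    simp_rw [hmw]
    rw [← Finset.prod_univ_sum]
    have hIcc : (Finset.Icc (-1:ℤ) 1) = ({-1, 0, 1} : Finset ℤ) := by decide
    have hsum3 : ∑ x ∈ Finset.Icc (-1:ℤ) 1, g x = q 0 + 2 * W := by
      rw [hIcc]
      rw [show ({-1, 0, 1} : Finset ℤ) = insert (-1) (insert 0 {1}) from rfl]
      rw [Finset.sum_insert (by decide), Finset.sum_insert (by decide),
        Finset.sum_singleton, hgm1, hg00, hg1]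
      ring
    have : ∀ i : Fin n, (∑ x ∈ (if i ∈ A then ({1} : Finset ℤ)
        else Finset.Icc (-1:ℤ) 1), g x) = if i ∈ A then W else q 0 + 2 * W := by
      intro i
      by_cases hi : i ∈ A
      · simp [hi, hg1]
      · simp [hi, hsum3]
    simp_rw [this]
    rw [Finset.prod_ite]
    have e1 : Finset.univ.filter (fun i : Fin n => i ∈ A) = A := by ext i; simp
    have e2 : Finset.univ.filter (fun i : Fin n => ¬ i ∈ A) = Finset.univ \ A := by
      ext i; simp
    rw [e1, e2, Finset.prod_const, Finset.prod_const, hAcard,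
      Finset.card_sdiff_of_subset (Finset.subset_univ A), Finset.card_univ, Fintype.card_fin, hAcard]
  -- Step 6: put it together and do the numeric estimate
  have hstep6 : (∑ k ∈ Finset.Icc kbar n, qtilde n 1 q (k : ℤ)) ≤
      (n.choose kbar : ℝ) * (W ^ kbar * (q 0 + 2 * W) ^ (n - kbar)) := by
    refine (hstep2.trans hstep3).trans ?_
    rw [hstep4, Finset.sum_congr rfl hstep5, Finset.sum_const,
      Finset.card_powersetCard, Finset.card_univ, Fintype.card_fin, nsmul_eq_mul]
  refine hstep6.trans ?_
  -- numeric estimates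
  have hWw : W = w / n := by rw [hw]; field_simp
  have hq02W : q 0 + 2 * W ≤ 1 + w / n := by
    have : W ≤ q 1 + q (-1) := max_le (by linarith) (by linarith)
    rw [hWw] at *
    linarith
  have hbase0 : 0 ≤ q 0 + 2 * W := by positivity
  have hexp : (q 0 + 2 * W) ^ (n - kbar) ≤ Real.exp w := by
    calc (q 0 + 2 * W) ^ (n - kbar) ≤ (1 + w / n) ^ (n - kbar) :=
          pow_le_pow_left₀ hbase0 hq02W _
      _ ≤ (1 + w / n) ^ n := by
          refine pow_le_pow_right₀ ?_ (Nat.sub_le n kbar)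
          have : 0 ≤ w / n := by positivity
          linarith
      _ ≤ (Real.exp (w / n)) ^ n := by
          refine pow_le_pow_left₀ (by positivity) ?_ n
          have := Real.add_one_le_exp (w / n)
          linarith
      _ = Real.exp w := by
          rw [← Real.exp_nat_mul]
          congr 1
          field_simp
  have hchoosele : (n.choose kbar : ℝ) ≤ (n:ℝ) ^ kbar / (Nat.factorial kbar : ℝ) := by
    exact_mod_cast Nat.choose_le_pow_div kbar n
  have hfa : (0:ℝ) < (Nat.factorial kbar : ℝ) := by exact_mod_cast kbar.factorial_pos
  calc (n.choose kbar : ℝ) * (W ^ kbar * (q 0 + 2 * W) ^ (n - kbar))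
      ≤ ((n:ℝ) ^ kbar / (Nat.factorial kbar : ℝ)) * (W ^ kbar * Real.exp w) := by
        refine mul_le_mul hchoosele ?_ (by positivity) (by positivity)
        exact mul_le_mul_of_nonneg_left hexp (by positivity)
    _ = Real.exp w * w ^ kbar / (Nat.factorial kbar : ℝ) := by
        rw [hWw, div_pow]
        field_simp
    _ ≤ 4 * Real.exp w * w ^ kbar / (Nat.factorial kbar : ℝ) := by
        have h1 : (0:ℝ) ≤ Real.exp w * w ^ kbar / (Nat.factorial kbar : ℝ) := by positivity
        have : Real.exp w * w ^ kbar / (Nat.factorial kbar : ℝ) =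
            1 * (Real.exp w * w ^ kbar / (Nat.factorial kbar : ℝ)) := by ring
        rw [this, show (4:ℝ) * Real.exp w * w ^ kbar / (Nat.factorial kbar : ℝ) =
          4 * (Real.exp w * w ^ kbar / (Nat.factorial kbar : ℝ)) by ring]
        exact mul_le_mul_of_nonneg_right (by norm_num) h1
end
end

section
/- Let h > 0 be a real number. For every integer k̄ with 2·e^{h}·w − 1 ≤ k̄ ≤ n one has ∑_{k=k̄}^{n} e^{hk}·q̃^{(n)}(k) ≤ 4·e^{w}·(e^{h}w)^{k̄}/k̄!. -/
open Finset

open scoped Classical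

noncomputable section

open HScut

section Aux

open Finset

private lemma sum_biUnion_le_sum_sum {ι α : Type*} [DecidableEq ι] [DecidableEq α]
    (s : Finset ι) (t : ι → Finset α) (f : α → ℝ) :
    (∀ i ∈ s, ∀ x ∈ t i, 0 ≤ f x) → ∑ x ∈ s.biUnion t, f x ≤ ∑ i ∈ s, ∑ x ∈ t i, f x := by
  classical
  induction s using Finset.induction_on with
  | empty => intro _; simp
  | @insert a s ha ih =>
    intro hf
    rw [Finset.biUnion_insert, Finset.sum_insert ha]
    have h2 := Finset.sum_union_inter (s₁ := t a) (s₂ := s.biUnion t) (f := f)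
    have h3 : 0 ≤ ∑ x ∈ t a ∩ s.biUnion t, f x :=
      Finset.sum_nonneg fun x hx =>
        hf a (Finset.mem_insert_self a s) x (Finset.mem_of_mem_inter_left hx)
    have h4 : ∑ x ∈ s.biUnion t, f x ≤ ∑ i ∈ s, ∑ x ∈ t i, f x :=
      ih fun i hi x hx => hf i (Finset.mem_insert_of_mem hi) x hx
    linarith

private lemma pow_div_factorial_le (u : ℝ) (hu0 : 0 ≤ u) (m : ℕ) (hum : 2 * u ≤ (m : ℝ) + 1) :
    ∀ j : ℕ, u ^ (m + j) / ((m + j).factorial : ℝ) ≤ u ^ m / (m.factorial : ℝ) * (1 / 2) ^ j := by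
  intro j
  induction j with
  | zero => simp
  | succ j ih =>
    have hfac : (0 : ℝ) < ((m + j).factorial : ℝ) := by
      exact_mod_cast (m + j).factorial_pos
    have h1 : u ^ (m + (j + 1)) / ((m + (j + 1)).factorial : ℝ)
        = u ^ (m + j) / ((m + j).factorial : ℝ) * (u / ((m : ℝ) + j + 1)) := by
      have : (m + (j + 1)) = (m + j) + 1 := by omega
      rw [this, pow_succ, Nat.factorial_succ]
      push_cast
      rw [div_mul_div_comm]
      ring
    have h2 : u / ((m : ℝ) + j + 1) ≤ 1 / 2 := by
      rw [div_le_div_iff₀ (by positivity) (by norm_num)]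
      have : (0:ℝ) ≤ (j : ℝ) := Nat.cast_nonneg j
      linarith
    have h3 : 0 ≤ u ^ (m + j) / ((m + j).factorial : ℝ) := by positivity
    have h4 : 0 ≤ u ^ m / (m.factorial : ℝ) * (1 / 2) ^ j := by positivity
    calc u ^ (m + (j + 1)) / ((m + (j + 1)).factorial : ℝ)
        = u ^ (m + j) / ((m + j).factorial : ℝ) * (u / ((m : ℝ) + j + 1)) := h1
      _ ≤ u ^ m / (m.factorial : ℝ) * (1 / 2) ^ j * (1 / 2) :=
          mul_le_mul ih h2 (by positivity) h4
      _ = u ^ m / (m.factorial : ℝ) * (1 / 2) ^ (j + 1) := by ring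

private lemma inner_sum_eq (n : ℕ) (q : ℤ → ℝ) (A : Finset (Fin n)) :
    ∑ s ∈ (paths n 1).filter (fun s => ∀ i ∈ A, s i = 1), modWeight n q s
      = (max (q 1) (q (-1))) ^ A.card
        * (q 0 + (max (q 1) (q (-1)) + max (q 1) (q (-1)))) ^ (n - A.card) := by
  classical
  set t : Fin n → Finset ℤ :=
    fun i => if i ∈ A then ({1} : Finset ℤ) else Finset.Icc (-1) 1 with ht
  have hone : (1 : ℤ) ∈ Finset.Icc (-1 : ℤ) 1 := Finset.mem_Icc.mpr ⟨by omega, by omega⟩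
  have hset : (paths n 1).filter (fun s => ∀ i ∈ A, s i = 1) = Fintype.piFinset t := by
    ext s
    simp only [Finset.mem_filter, paths, Fintype.mem_piFinset, ht]
    constructor
    · rintro ⟨h1, h2⟩ i
      by_cases hi : i ∈ A
      · simp [hi, h2 i hi]
      · simpa [hi] using h1 i
    · intro hs
      refine ⟨fun i => ?_, fun i hi => ?_⟩
      · by_cases hi : i ∈ A
        · have := hs i; simp only [hi, if_true, Finset.mem_singleton] at this
          rw [this]; exact hone
        · have := hs i; simpa [hi] using this
      · have := hs i; simpa [hi] using this
  have hval : ∀ i : Fin n,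
      (∑ j ∈ t i, (if j = 0 then q 0 else max (q j) (q (-j))))
        = if i ∈ A then max (q 1) (q (-1)) else q 0 + (max (q 1) (q (-1)) + max (q 1) (q (-1))) := by
    intro i
    by_cases hi : i ∈ A
    · simp [ht, hi]
    · have hIcc : Finset.Icc (-1 : ℤ) 1 = {-1, 0, 1} := by
        ext x
        rw [Finset.mem_Icc, Finset.mem_insert, Finset.mem_insert, Finset.mem_singleton]
        omega
      simp only [ht, hi, if_false, hIcc]
      rw [Finset.sum_insert (by norm_num), Finset.sum_insert (by norm_num), Finset.sum_singleton]
      norm_num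
      rw [max_comm (q (-1)) (q 1)]
      ring
  calc ∑ s ∈ (paths n 1).filter (fun s => ∀ i ∈ A, s i = 1), modWeight n q s
      = ∑ s ∈ Fintype.piFinset t,
          ∏ i, (fun (_ : Fin n) (j : ℤ) => if j = 0 then q 0 else max (q j) (q (-j))) i (s i) := by
        rw [hset]; rfl
    _ = ∏ i, ∑ j ∈ t i, (if j = 0 then q 0 else max (q j) (q (-j))) :=
        (Finset.prod_univ_sum t (fun (_ : Fin n) (j : ℤ) => if j = 0 then q 0 else max (q j) (q (-j)))).symm
    _ = ∏ i : Fin n,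
          (if i ∈ A then max (q 1) (q (-1))
            else q 0 + (max (q 1) (q (-1)) + max (q 1) (q (-1)))) := by
        exact Finset.prod_congr rfl fun i _ => hval i
    _ = _ := by
        rw [Finset.prod_ite _ _, Finset.prod_const, Finset.prod_const]
        have h1 : (Finset.univ.filter (fun i : Fin n => i ∈ A)) = A := by
          ext i; simp
        have h2 : (Finset.univ.filter (fun i : Fin n => ¬ i ∈ A)).card = n - A.card := by
          have h3 := Finset.card_filter_add_card_filter_not
            (s := (Finset.univ : Finset (Fin n))) (p := fun i : Fin n => i ∈ A)
          rw [h1, Finset.card_univ, Fintype.card_fin] at h3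
          omega
        rw [h1, h2]

end Aux


/-- For `h > 0` and every integer `k̄` with `2 e^h w − 1 ≤ k̄ ≤ n` one has
`∑_{k=k̄}^{n} e^{hk} q̃^{(n)}(k) ≤ 4 e^w (e^h w)^{k̄} / k̄!`. -/
theorem qtilde_exp_tail_sum_bound (n : ℕ) (hn : 1 ≤ n) (q : ℤ → ℝ)
    (hqm : 0 ≤ q (-1)) (hq0 : 0 ≤ q 0) (hqp : 0 ≤ q 1)
    (hsum : q (-1) + q 0 + q 1 = 1)
    (w : ℝ) (hw : w = (n : ℝ) * max (q 1) (q (-1)))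
    (h : ℝ) (hh : 0 < h)
    (kbar : ℕ) (hk1 : 2 * Real.exp h * w - 1 ≤ (kbar : ℝ)) (hk2 : kbar ≤ n) :
    (∑ k ∈ Finset.Icc kbar n, Real.exp (h * (k : ℝ)) * qtilde n 1 q (k : ℤ)) ≤
      4 * Real.exp w * (Real.exp h * w) ^ kbar / (Nat.factorial kbar : ℝ) := by
  classical
  set M : ℝ := max (q 1) (q (-1)) with hM
  have hM0 : 0 ≤ M := le_trans hqp (le_max_left _ _)
  have hMle : M ≤ q 1 + q (-1) := max_le (by linarith) (by linarith)
  have hq2 : q 0 + (M + M) ≤ 1 + M := by linarith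
  have hq2nn : 0 ≤ q 0 + (M + M) := by linarith
  have hw0 : 0 ≤ w := by rw [hw]; positivity
  have hu0 : 0 ≤ Real.exp h * w := by positivity
  have hu2 : 2 * (Real.exp h * w) ≤ (kbar : ℝ) + 1 := by nlinarith [hk1]
  have hmodnn : ∀ s ∈ paths n 1, 0 ≤ modWeight n q s := by
    intro s hs
    apply Finset.prod_nonneg
    intro i _
    have hsi : s i ∈ Finset.Icc (-1 : ℤ) 1 := (Fintype.mem_piFinset.mp hs) i
    rw [Finset.mem_Icc] at hsi
    have hcases : s i = -1 ∨ s i = 0 ∨ s i = 1 := by omega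
    rcases hcases with h1 | h1 | h1
    · rw [h1]; norm_num; exact Or.inl hqm
    · rw [h1]; norm_num [hq0]
    · rw [h1]; norm_num; exact Or.inl hqp
  -- Step 1: pointwise bound on `qtilde`
  have key : ∀ k ∈ Finset.Icc kbar n,
      qtilde n 1 q (k : ℤ) ≤ Real.exp w * w ^ k / (k.factorial : ℝ) := by
    intro k hk
    obtain ⟨hk1', hk2'⟩ := Finset.mem_Icc.mp hk
    set G : Finset (Fin n) → Finset (Fin n → ℤ) :=
      fun A => (paths n 1).filter (fun s => ∀ i ∈ A, s i = 1) with hG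
    have hsub : (paths n 1).filter (fun s => levelAt n s n = (k : ℤ))
        ⊆ (Finset.univ.powersetCard k).biUnion G := by
      intro s hs
      obtain ⟨hsp, hsl⟩ := Finset.mem_filter.mp hs
      have hfilt : Finset.univ.filter (fun i : Fin n => (i : ℕ) < n) = Finset.univ :=
        Finset.filter_true_of_mem (fun i _ => i.isLt)
      have hlv : (k : ℤ) = ∑ i, s i := by
        rw [← hsl]; unfold levelAt; rw [hfilt]
      have hcard : k ≤ (Finset.univ.filter (fun i : Fin n => s i = 1)).card := by
        have hle : (k : ℤ) ≤ ∑ i : Fin n, (if s i = 1 then (1 : ℤ) else 0) := by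
          rw [hlv]
          apply Finset.sum_le_sum
          intro i _
          have hsi : s i ∈ Finset.Icc (-1 : ℤ) 1 := (Fintype.mem_piFinset.mp hsp) i
          rw [Finset.mem_Icc] at hsi
          by_cases h1 : s i = 1
          · simp [h1]
          · simp only [h1, if_false]; omega
        rw [Finset.sum_boole] at hle
        exact_mod_cast hle
      obtain ⟨A, hAsub, hAcard⟩ := Finset.exists_subset_card_eq hcard
      apply Finset.mem_biUnion.mpr
      refine ⟨A, Finset.mem_powersetCard.mpr ⟨Finset.subset_univ A, hAcard⟩, ?_⟩
      refine Finset.mem_filter.mpr ⟨hsp, fun i hi => ?_⟩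
      simpa using (Finset.mem_filter.mp (hAsub hi)).2
    have hUB : qtilde n 1 q (k : ℤ)
        ≤ ∑ A ∈ Finset.univ.powersetCard k, ∑ s ∈ G A, modWeight n q s := by
      refine le_trans (Finset.sum_le_sum_of_subset_of_nonneg hsub ?_) ?_
      · intro s hs _
        exact hmodnn s ((Finset.mem_filter.mp (Finset.mem_biUnion.mp hs).choose_spec.2).1)
      · exact sum_biUnion_le_sum_sum _ G (modWeight n q)
          (fun A _ s hs => hmodnn s (Finset.mem_filter.mp hs).1)
    have hinner : ∀ A ∈ Finset.univ.powersetCard k,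
        ∑ s ∈ G A, modWeight n q s = M ^ k * (q 0 + (M + M)) ^ (n - k) := by
      intro A hA
      have hAcard : A.card = k := (Finset.mem_powersetCard.mp hA).2
      rw [hG]
      rw [inner_sum_eq n q A, hAcard, hM]
    have step2 : qtilde n 1 q (k : ℤ)
        ≤ (n.choose k : ℝ) * (M ^ k * (q 0 + (M + M)) ^ (n - k)) := by
      calc qtilde n 1 q (k : ℤ)
          ≤ ∑ A ∈ Finset.univ.powersetCard k, ∑ s ∈ G A, modWeight n q s := hUB
        _ = ∑ _A ∈ (Finset.univ.powersetCard k : Finset (Finset (Fin n))),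
              M ^ k * (q 0 + (M + M)) ^ (n - k) := Finset.sum_congr rfl hinner
        _ = ((Finset.univ.powersetCard k : Finset (Finset (Fin n))).card : ℝ)
              * (M ^ k * (q 0 + (M + M)) ^ (n - k)) := by
            rw [Finset.sum_const, nsmul_eq_mul]
        _ = (n.choose k : ℝ) * (M ^ k * (q 0 + (M + M)) ^ (n - k)) := by
            rw [Finset.card_powersetCard, Finset.card_univ, Fintype.card_fin]
    have hchoose : (n.choose k : ℝ) ≤ (n : ℝ) ^ k / (k.factorial : ℝ) := by
      have := Nat.choose_le_pow_div (α := ℝ) k n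
      simpa using this
    have hpow : (q 0 + (M + M)) ^ (n - k) ≤ Real.exp w := by
      have e1 : q 0 + (M + M) ≤ Real.exp M :=
        le_trans hq2 (by linarith [Real.add_one_le_exp M])
      calc (q 0 + (M + M)) ^ (n - k) ≤ (Real.exp M) ^ (n - k) :=
            pow_le_pow_left₀ hq2nn e1 _
        _ ≤ (Real.exp M) ^ n :=
            pow_le_pow_right₀ (Real.one_le_exp hM0) (Nat.sub_le n k)
        _ = Real.exp ((n : ℕ) * M) := (Real.exp_nat_mul M n).symm
        _ = Real.exp w := by rw [hw]
    have hfk : ((k.factorial : ℝ)) ≠ 0 := Nat.cast_ne_zero.mpr k.factorial_ne_zero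
    calc qtilde n 1 q (k : ℤ)
        ≤ (n.choose k : ℝ) * (M ^ k * (q 0 + (M + M)) ^ (n - k)) := step2
      _ ≤ ((n : ℝ) ^ k / (k.factorial : ℝ)) * (M ^ k * Real.exp w) := by
          apply mul_le_mul hchoose ?_ ?_ ?_
          · exact mul_le_mul_of_nonneg_left hpow (by positivity)
          · positivity
          · positivity
      _ = Real.exp w * w ^ k / (k.factorial : ℝ) := by
          rw [hw, mul_pow]
          field_simp
  -- Step 2: summation
  have hfkb : ((kbar.factorial : ℝ)) ≠ 0 := Nat.cast_ne_zero.mpr kbar.factorial_ne_zero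
  calc ∑ k ∈ Finset.Icc kbar n, Real.exp (h * (k : ℝ)) * qtilde n 1 q (k : ℤ)
      ≤ ∑ k ∈ Finset.Icc kbar n,
          Real.exp w * ((Real.exp h * w) ^ k / (k.factorial : ℝ)) := by
        apply Finset.sum_le_sum
        intro k hk
        have h2 : Real.exp (h * (k : ℝ)) = Real.exp h ^ k := by
          rw [mul_comm, Real.exp_nat_mul]
        calc Real.exp (h * (k : ℝ)) * qtilde n 1 q (k : ℤ)
            ≤ Real.exp (h * (k : ℝ)) * (Real.exp w * w ^ k / (k.factorial : ℝ)) :=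
              mul_le_mul_of_nonneg_left (key k hk) (Real.exp_nonneg _)
          _ = Real.exp w * ((Real.exp h * w) ^ k / (k.factorial : ℝ)) := by
              rw [h2, mul_pow]; ring
    _ = Real.exp w * ∑ k ∈ Finset.Icc kbar n,
          (Real.exp h * w) ^ k / (k.factorial : ℝ) := (Finset.mul_sum _ _ _).symm
    _ ≤ Real.exp w * (2 * (Real.exp h * w) ^ kbar / (kbar.factorial : ℝ)) := by
        apply mul_le_mul_of_nonneg_left ?_ (Real.exp_nonneg w)
        calc ∑ k ∈ Finset.Icc kbar n, (Real.exp h * w) ^ k / (k.factorial : ℝ)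
            ≤ ∑ k ∈ Finset.Icc kbar n,
                (Real.exp h * w) ^ kbar / (kbar.factorial : ℝ) * (1 / 2) ^ (k - kbar) := by
              apply Finset.sum_le_sum
              intro k hk
              have hk1'' := (Finset.mem_Icc.mp hk).1
              have := pow_div_factorial_le (Real.exp h * w) hu0 kbar hu2 (k - kbar)
              rwa [Nat.add_sub_cancel' hk1''] at this
          _ = (Real.exp h * w) ^ kbar / (kbar.factorial : ℝ)
                * ∑ k ∈ Finset.Icc kbar n, ((1 : ℝ) / 2) ^ (k - kbar) :=
              (Finset.mul_sum _ _ _).symm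
          _ ≤ (Real.exp h * w) ^ kbar / (kbar.factorial : ℝ) * 2 := by
              apply mul_le_mul_of_nonneg_left ?_ (by positivity)
              rw [← Finset.Ico_add_one_right_eq_Icc, Finset.sum_Ico_eq_sum_range]
              have hcan : ∀ i : ℕ, ((1 : ℝ) / 2) ^ (kbar + i - kbar) = (1 / 2 : ℝ) ^ i := by
                intro i; congr 1; omega
              rw [Finset.sum_congr rfl fun i _ => hcan i]
              have hgeom : ∀ N : ℕ,
                  ∑ j ∈ Finset.range N, ((1 : ℝ) / 2) ^ j = 2 - 2 * (1 / 2) ^ N := by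
                intro N
                induction N with
                | zero => simp
                | succ N ih => rw [Finset.sum_range_succ, ih]; ring
              rw [hgeom]
              have : (0 : ℝ) ≤ (1 / 2 : ℝ) ^ (n + 1 - kbar) := by positivity
              linarith
          _ = 2 * (Real.exp h * w) ^ kbar / (kbar.factorial : ℝ) := by ring
    _ ≤ 4 * Real.exp w * (Real.exp h * w) ^ kbar / (kbar.factorial : ℝ) := by
        have h1 : 0 ≤ (Real.exp h * w) ^ kbar / (kbar.factorial : ℝ) := by positivity
        have h2 : 0 ≤ Real.exp w := Real.exp_nonneg w
        have : Real.exp w * (2 * (Real.exp h * w) ^ kbar / (kbar.factorial : ℝ))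
            = 2 * (Real.exp w * ((Real.exp h * w) ^ kbar / (kbar.factorial : ℝ))) := by ring
        rw [this]
        have h4 : 4 * Real.exp w * (Real.exp h * w) ^ kbar / (kbar.factorial : ℝ)
            = 4 * (Real.exp w * ((Real.exp h * w) ^ kbar / (kbar.factorial : ℝ))) := by ring
        rw [h4]
        nlinarith
end
end

section
/- Let h > 0 be a real number. For every integer k̄ with 2w − 1 ≤ k̄ ≤ n one has ∑_{k=k̄}^{n} e^{−hk}·q̃^{(n)}(k) ≤ 4·e^{w}·(e^{−h}w)^{k̄}/k̄!. -/
open Finset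

open scoped Classical

noncomputable section

namespace HScut

lemma qtilde_le_choose_sum (n : ℕ) (q : ℤ → ℝ)
    (hqm : 0 ≤ q (-1)) (hq0 : 0 ≤ q 0) (hqp : 0 ≤ q 1) (hq0le : q 0 ≤ 1) (k : ℕ) :
    qtilde n 1 q (k : ℤ) ≤
      ∑ b ∈ Finset.range (n+1),
        (n.choose (k+b) : ℝ) * (n.choose b) * (max (q 1) (q (-1))) ^ (k + 2*b) := by
  classical
  set a := max (q 1) (q (-1)) with ha_def
  have ha : 0 ≤ a := le_trans hqp (le_max_left _ _)
  set T : Finset ((_ : ℕ) × (Finset (Fin n) × Finset (Fin n))) :=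
    (Finset.range (n+1)).sigma
      (fun b => (Finset.univ.powersetCard (k+b)) ×ˢ (Finset.univ.powersetCard b)) with hT
  set g : (_ : ℕ) × (Finset (Fin n) × Finset (Fin n)) → ℝ := fun x => a ^ (k + 2 * x.1) with hg
  have hTsum : ∑ x ∈ T, g x =
      ∑ b ∈ Finset.range (n+1),
        (n.choose (k+b) : ℝ) * (n.choose b) * a ^ (k + 2*b) := by
    rw [hT, Finset.sum_sigma]
    refine Finset.sum_congr rfl fun b _ => ?_
    simp only [hg]
    rw [Finset.sum_const, Finset.card_product, Finset.card_powersetCard,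
      Finset.card_powersetCard, Finset.card_univ, Fintype.card_fin]
    push_cast
    ring
  rw [← hTsum]
  set ι : (Fin n → ℤ) → (_ : ℕ) × (Finset (Fin n) × Finset (Fin n)) :=
    fun s => ⟨(Finset.univ.filter (fun i => s i = -1)).card,
      (Finset.univ.filter (fun i => s i = 1), Finset.univ.filter (fun i => s i = -1))⟩ with hι
  set A := (paths n 1).filter (fun s => levelAt n s n = (k : ℤ)) with hA
  -- basic facts about members of A
  have hrange : ∀ s ∈ A, ∀ i, s i = -1 ∨ s i = 0 ∨ s i = 1 := by
    intro s hs i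
    rw [hA, Finset.mem_filter] at hs
    have := (Fintype.mem_piFinset.1 hs.1) i
    rw [Finset.mem_Icc] at this
    omega
  have hcard : ∀ s ∈ A,
      (Finset.univ.filter (fun i => s i = 1)).card
        = (Finset.univ.filter (fun i => s i = -1)).card + k := by
    intro s hs
    have hr := hrange s hs
    rw [hA, Finset.mem_filter] at hs
    have hlev : levelAt n s n = ∑ i, s i := by
      unfold levelAt
      rw [Finset.filter_true_of_mem (fun i _ => i.isLt)]
    have hsum : ∑ i, s i =
        ((Finset.univ.filter (fun i => s i = 1)).card : ℤ)
          - ((Finset.univ.filter (fun i => s i = -1)).card : ℤ) := by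
      have h1 : ∀ i ∈ Finset.univ,
          s i = (if s i = 1 then (1:ℤ) else 0) - (if s i = -1 then 1 else 0) := by
        intro i _
        rcases hr i with h|h|h <;> simp [h]
      rw [Finset.sum_congr rfl h1, Finset.sum_sub_distrib]
      simp [Finset.sum_boole]
    have := hs.2
    rw [hlev, hsum] at this
    omega
  have hdisj : ∀ s : Fin n → ℤ,
      Disjoint (Finset.univ.filter (fun i => s i = 1))
        (Finset.univ.filter (fun i => s i = -1)) := by
    intro s
    rw [Finset.disjoint_left]
    intro i h1 h2
    simp only [Finset.mem_filter] at h1 h2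
    omega
  calc ∑ s ∈ A, modWeight n q s
      ≤ ∑ s ∈ A, g (ι s) := by
        refine Finset.sum_le_sum fun s hs => ?_
        have hr := hrange s hs
        have hc := hcard s hs
        have : modWeight n q s ≤
            ∏ i : Fin n, (if i ∈ (Finset.univ.filter (fun i => s i = 1))
              ∪ (Finset.univ.filter (fun i => s i = -1)) then a else 1) := by
          unfold modWeight
          refine Finset.prod_le_prod (fun i _ => ?_) (fun i _ => ?_)
          · rcases hr i with h|h|h <;> simp [h, hq0, ha, hqm, hqp, le_max_iff]
          · rcases hr i with h|h|h
            · simp [h, max_comm (q (-1)) (q 1), ha_def]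
            · have : i ∉ (Finset.univ.filter (fun i => s i = 1))
                  ∪ (Finset.univ.filter (fun i => s i = -1)) := by
                simp [h]
              simp [h, this, hq0le]
            · simp [h, ha_def]
        refine le_trans this (le_of_eq ?_)
        rw [Finset.prod_ite_mem, Finset.univ_inter, Finset.prod_const,
          Finset.card_union_of_disjoint (hdisj s), hc]
        simp [hg, hι]
        ring_nf
    _ = ∑ x ∈ A.image ι, g x := by
        rw [Finset.sum_image]
        intro s hs s' hs' heq
        have hP := congrArg (fun x => x.2.1) heq
        have hM := congrArg (fun x => x.2.2) heq
        simp only [hι] at hP hM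
        funext i
        have h1 : i ∈ Finset.univ.filter (fun j => s j = 1) ↔
            i ∈ Finset.univ.filter (fun j => s' j = 1) := by rw [hP]
        have h2 : i ∈ Finset.univ.filter (fun j => s j = -1) ↔
            i ∈ Finset.univ.filter (fun j => s' j = -1) := by rw [hM]
        simp only [Finset.mem_filter, Finset.mem_univ, true_and] at h1 h2
        rcases hrange s hs i with h|h|h <;> rcases hrange s' hs' i with h'|h'|h' <;> omega
    _ ≤ ∑ x ∈ T, g x := by
        refine Finset.sum_le_sum_of_subset_of_nonneg ?_ (fun x _ _ => pow_nonneg ha _)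
        intro x hx
        rw [Finset.mem_image] at hx
        obtain ⟨s, hs, rfl⟩ := hx
        have hc := hcard s hs
        simp only [hι, hT, Finset.mem_sigma]
        constructor
        · rw [Finset.mem_range]
          have : (Finset.univ.filter (fun i => s i = -1)).card ≤ n := by
            calc _ ≤ Finset.univ.card := Finset.card_le_card (Finset.filter_subset _ _)
            _ = n := by simp
          omega
        · rw [Finset.mem_product]
          constructor <;> rw [Finset.mem_powersetCard]
          · refine ⟨Finset.subset_univ _, ?_⟩
            simpa [Nat.add_comm] using hc
          · exact ⟨Finset.subset_univ _, rfl⟩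


end HScut

open HScut

lemma choose_sum_le_aux (n k : ℕ) (a w : ℝ) (ha : 0 ≤ a) (hw : w = n * a)
    (hk : 2 * w ≤ (k : ℝ) + 1) :
    ∑ b ∈ Finset.range (n+1), (n.choose (k+b) : ℝ) * (n.choose b) * a ^ (k + 2*b) ≤
      w ^ k / (Nat.factorial k : ℝ) * Real.exp (w / 2) := by
  have hw0 : 0 ≤ w := hw ▸ mul_nonneg (Nat.cast_nonneg n) ha
  have hterm : ∀ b : ℕ, (n.choose (k+b) : ℝ) * (n.choose b) * a ^ (k + 2*b) ≤
      w ^ k / (Nat.factorial k : ℝ) * ((w/2) ^ b / (Nat.factorial b : ℝ)) := by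
    intro b
    have h1 : (n.choose (k+b) : ℝ) ≤ (n:ℝ) ^ (k+b) / (Nat.factorial (k+b) : ℝ) :=
      Nat.choose_le_pow_div _ _
    have h2 : (n.choose b : ℝ) ≤ (n:ℝ) ^ b / (Nat.factorial b : ℝ) :=
      Nat.choose_le_pow_div _ _
    have hkb : (0:ℝ) < (Nat.factorial (k+b) : ℝ) := by positivity
    have hb : (0:ℝ) < (Nat.factorial b : ℝ) := by positivity
    have hkf : (0:ℝ) < (Nat.factorial k : ℝ) := by positivity
    have step1 : (n.choose (k+b) : ℝ) * (n.choose b) * a ^ (k + 2*b) ≤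
        ((n:ℝ) ^ (k+b) / (Nat.factorial (k+b) : ℝ)) * ((n:ℝ) ^ b / (Nat.factorial b : ℝ))
          * a ^ (k + 2*b) := by
      apply mul_le_mul_of_nonneg_right _ (pow_nonneg ha _)
      exact mul_le_mul h1 h2 (Nat.cast_nonneg _) (by positivity)
    have step2 : ((n:ℝ) ^ (k+b) / (Nat.factorial (k+b) : ℝ)) * ((n:ℝ) ^ b / (Nat.factorial b : ℝ))
          * a ^ (k + 2*b)
        = w ^ (k + 2*b) / ((Nat.factorial (k+b) : ℝ) * (Nat.factorial b : ℝ)) := by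
      rw [hw, mul_pow]
      rw [show k + 2*b = (k+b) + b by ring, pow_add ((n:ℝ)) (k+b) b]
      field_simp
    have hfact : (Nat.factorial k : ℝ) * ((k:ℝ)+1) ^ b ≤ (Nat.factorial (k+b) : ℝ) := by
      have h := Nat.factorial_mul_pow_le_factorial (m := k) (n := b)
      calc (Nat.factorial k : ℝ) * ((k:ℝ)+1) ^ b
          = ((Nat.factorial k * (k+1) ^ b : ℕ) : ℝ) := by push_cast; ring
        _ ≤ _ := by exact_mod_cast Nat.cast_le.2 h
    have hk1 : (0:ℝ) < (k:ℝ) + 1 := by positivity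
    have hq : (w^2/((k:ℝ)+1)) ≤ w/2 := by
      rw [div_le_div_iff₀ hk1 (by norm_num)]
      nlinarith
    have hsplit : w ^ (k + 2*b) = w ^ k * (w^2) ^ b := by
      rw [pow_add, pow_mul]
    have step3 : w ^ (k + 2*b) / ((Nat.factorial (k+b) : ℝ) * (Nat.factorial b : ℝ)) ≤
        w ^ k / (Nat.factorial k : ℝ) * ((w/2) ^ b / (Nat.factorial b : ℝ)) := by
      rw [hsplit]
      have e1 : w ^ k * (w^2) ^ b / ((Nat.factorial (k+b) : ℝ) * (Nat.factorial b : ℝ))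
          ≤ w ^ k * (w^2) ^ b /
            (((Nat.factorial k : ℝ) * ((k:ℝ)+1) ^ b) * (Nat.factorial b : ℝ)) := by
        gcongr <;> first | positivity | exact Or.inl trivial
      have e2 : w ^ k * (w^2) ^ b /
            (((Nat.factorial k : ℝ) * ((k:ℝ)+1) ^ b) * (Nat.factorial b : ℝ))
          = w ^ k / (Nat.factorial k : ℝ) * ((w^2/((k:ℝ)+1)) ^ b / (Nat.factorial b : ℝ)) := by
        rw [div_pow]
        field_simp
      have e3 : (w^2/((k:ℝ)+1)) ^ b / (Nat.factorial b : ℝ) ≤ (w/2) ^ b / (Nat.factorial b : ℝ) := by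
        gcongr
      calc w ^ k * (w^2) ^ b / ((Nat.factorial (k+b) : ℝ) * (Nat.factorial b : ℝ))
          ≤ _ := e1
        _ = _ := e2
        _ ≤ w ^ k / (Nat.factorial k : ℝ) * ((w/2) ^ b / (Nat.factorial b : ℝ)) := by
            apply mul_le_mul_of_nonneg_left e3 (by positivity)
    exact le_trans step1 (le_trans (le_of_eq step2) step3)
  calc ∑ b ∈ Finset.range (n+1), (n.choose (k+b) : ℝ) * (n.choose b) * a ^ (k + 2*b)
      ≤ ∑ b ∈ Finset.range (n+1),
          w ^ k / (Nat.factorial k : ℝ) * ((w/2) ^ b / (Nat.factorial b : ℝ)) :=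
        Finset.sum_le_sum fun b _ => hterm b
    _ = w ^ k / (Nat.factorial k : ℝ) *
          ∑ b ∈ Finset.range (n+1), (w/2) ^ b / (Nat.factorial b : ℝ) := by
        rw [Finset.mul_sum]
    _ ≤ w ^ k / (Nat.factorial k : ℝ) * Real.exp (w/2) := by
        apply mul_le_mul_of_nonneg_left _ (by positivity)
        exact Real.sum_le_exp_of_nonneg (by positivity) _

lemma geom_half_sum_le (N : ℕ) : ∑ i ∈ Finset.range N, (1/2:ℝ)^i ≤ 2 := by
  rw [geom_sum_eq (by norm_num : (1/2:ℝ) ≠ 1)]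
  have := pow_nonneg (by norm_num : (0:ℝ) ≤ 1/2) N
  have h2 := pow_le_one₀ (by norm_num : (0:ℝ) ≤ 1/2) (by norm_num : (1/2:ℝ) ≤ 1) (n := N)
  rw [div_le_iff_of_neg (by norm_num : (1/2:ℝ) - 1 < 0)]
  nlinarith

lemma tail_geom_sum_le (c : ℝ) (hc : 0 ≤ c) (kbar n : ℕ) (hck : 2 * c ≤ (kbar:ℝ) + 1) :
    ∑ k ∈ Finset.Icc kbar n, c ^ k / (Nat.factorial k : ℝ) ≤
      2 * (c ^ kbar / (Nat.factorial kbar : ℝ)) := by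
  rw [← Finset.Ico_add_one_right_eq_Icc, Finset.sum_Ico_eq_sum_range]
  have key : ∀ i : ℕ, c ^ (kbar + i) / (Nat.factorial (kbar + i) : ℝ) ≤
      c ^ kbar / (Nat.factorial kbar : ℝ) * (1/2:ℝ)^i := by
    intro i
    induction i with
    | zero => simp
    | succ i ih =>
      have hfac : (0:ℝ) < (Nat.factorial (kbar + i) : ℝ) := by positivity
      have hstep : c ^ (kbar + (i+1)) / (Nat.factorial (kbar + (i+1)) : ℝ)
          = c ^ (kbar + i) / (Nat.factorial (kbar + i) : ℝ) * (c / ((kbar:ℝ) + i + 1)) := by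
        rw [show kbar + (i+1) = (kbar + i) + 1 by ring, pow_succ, Nat.factorial_succ]
        push_cast
        field_simp
      have hhalf : c / ((kbar:ℝ) + i + 1) ≤ 1/2 := by
        rw [div_le_div_iff₀ (by positivity) (by norm_num)]
        have : (0:ℝ) ≤ (i:ℝ) := Nat.cast_nonneg i
        nlinarith
      calc c ^ (kbar + (i+1)) / (Nat.factorial (kbar + (i+1)) : ℝ)
          = c ^ (kbar + i) / (Nat.factorial (kbar + i) : ℝ) * (c / ((kbar:ℝ) + i + 1)) := hstep
        _ ≤ c ^ kbar / (Nat.factorial kbar : ℝ) * (1/2:ℝ)^i * (1/2) := by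
            apply mul_le_mul ih hhalf (by positivity) (by positivity)
        _ = c ^ kbar / (Nat.factorial kbar : ℝ) * (1/2:ℝ)^(i+1) := by ring
  calc ∑ i ∈ Finset.range (n + 1 - kbar), c ^ (kbar + i) / (Nat.factorial (kbar + i) : ℝ)
      ≤ ∑ i ∈ Finset.range (n + 1 - kbar),
          c ^ kbar / (Nat.factorial kbar : ℝ) * (1/2:ℝ)^i :=
        Finset.sum_le_sum fun i _ => key i
    _ = c ^ kbar / (Nat.factorial kbar : ℝ) * ∑ i ∈ Finset.range (n + 1 - kbar), (1/2:ℝ)^i := by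
        rw [Finset.mul_sum]
    _ ≤ c ^ kbar / (Nat.factorial kbar : ℝ) * 2 := by
        apply mul_le_mul_of_nonneg_left (geom_half_sum_le _) (by positivity)
    _ = 2 * (c ^ kbar / (Nat.factorial kbar : ℝ)) := by ring


/-- For `h > 0` and every integer `k̄` with `2w − 1 ≤ k̄ ≤ n` one has
`∑_{k=k̄}^{n} e^{−hk} q̃^{(n)}(k) ≤ 4 e^w (e^{−h} w)^{k̄} / k̄!`. -/
theorem qtilde_negexp_tail_sum_bound (n : ℕ) (hn : 1 ≤ n) (q : ℤ → ℝ)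
    (hqm : 0 ≤ q (-1)) (hq0 : 0 ≤ q 0) (hqp : 0 ≤ q 1)
    (hsum : q (-1) + q 0 + q 1 = 1)
    (w : ℝ) (hw : w = (n : ℝ) * max (q 1) (q (-1)))
    (h : ℝ) (hh : 0 < h)
    (kbar : ℕ) (hk1 : 2 * w - 1 ≤ (kbar : ℝ)) (hk2 : kbar ≤ n) :
    (∑ k ∈ Finset.Icc kbar n, Real.exp (-(h * (k : ℝ))) * qtilde n 1 q (k : ℤ)) ≤
      4 * Real.exp w * (Real.exp (-h) * w) ^ kbar / (Nat.factorial kbar : ℝ) := by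
  classical
  have ha : 0 ≤ max (q 1) (q (-1)) := le_trans hqp (le_max_left _ _)
  have hw0 : 0 ≤ w := hw ▸ mul_nonneg (Nat.cast_nonneg n) ha
  have hq0le : q 0 ≤ 1 := by linarith
  set c := Real.exp (-h) * w with hc
  have hc0 : 0 ≤ c := mul_nonneg (Real.exp_nonneg _) hw0
  have hexp1 : Real.exp (-h) ≤ 1 := by
    have h0 : Real.exp (-h) ≤ Real.exp 0 := Real.exp_le_exp.2 (by linarith)
    rwa [Real.exp_zero] at h0
  have hcw : c ≤ w := by
    calc c = Real.exp (-h) * w := hc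
      _ ≤ 1 * w := mul_le_mul_of_nonneg_right hexp1 hw0
      _ = w := one_mul w
  have step : ∀ k ∈ Finset.Icc kbar n,
      Real.exp (-(h * (k:ℝ))) * qtilde n 1 q (k : ℤ) ≤
        Real.exp (w/2) * (c ^ k / (Nat.factorial k : ℝ)) := by
    intro k hk
    rw [Finset.mem_Icc] at hk
    have hkc : (kbar:ℝ) ≤ (k:ℝ) := Nat.cast_le.2 hk.1
    have hk' : 2 * w ≤ (k:ℝ) + 1 := by linarith
    have h1 := qtilde_le_choose_sum n q hqm hq0 hqp hq0le k
    have h2 := choose_sum_le_aux n k _ w ha hw hk'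
    have h3 : qtilde n 1 q (k : ℤ) ≤ w^k / (Nat.factorial k : ℝ) * Real.exp (w/2) :=
      h1.trans h2
    calc Real.exp (-(h*(k:ℝ))) * qtilde n 1 q (k : ℤ)
        ≤ Real.exp (-(h*(k:ℝ))) * (w^k / (Nat.factorial k : ℝ) * Real.exp (w/2)) :=
          mul_le_mul_of_nonneg_left h3 (Real.exp_nonneg _)
      _ = Real.exp (w/2) * (c^k / (Nat.factorial k : ℝ)) := by
          rw [hc, mul_pow, ← Real.exp_nat_mul, show (k:ℝ) * (-h) = -(h*(k:ℝ)) by ring]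
          ring
  calc (∑ k ∈ Finset.Icc kbar n, Real.exp (-(h * (k : ℝ))) * qtilde n 1 q (k : ℤ))
      ≤ ∑ k ∈ Finset.Icc kbar n, Real.exp (w/2) * (c ^ k / (Nat.factorial k : ℝ)) :=
        Finset.sum_le_sum step
    _ = Real.exp (w/2) * ∑ k ∈ Finset.Icc kbar n, c ^ k / (Nat.factorial k : ℝ) := by
        rw [Finset.mul_sum]
    _ ≤ Real.exp (w/2) * (2 * (c ^ kbar / (Nat.factorial kbar : ℝ))) := by
        apply mul_le_mul_of_nonneg_left _ (Real.exp_nonneg _)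
        exact tail_geom_sum_le c hc0 kbar n (by linarith)
    _ ≤ 4 * Real.exp w * (Real.exp (-h) * w) ^ kbar / (Nat.factorial kbar : ℝ) := by
        have he : Real.exp (w/2) ≤ Real.exp w := Real.exp_le_exp.2 (by linarith)
        have hnn : (0:ℝ) ≤ c ^ kbar / (Nat.factorial kbar : ℝ) := by positivity
        have hrhs : 4 * Real.exp w * (Real.exp (-h) * w) ^ kbar / (Nat.factorial kbar : ℝ)
            = 4 * Real.exp w * (c ^ kbar / (Nat.factorial kbar : ℝ)) := by
          rw [hc, mul_div_assoc]
        rw [hrhs]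
        nlinarith [Real.exp_nonneg w, Real.exp_nonneg (w/2)]
end
end

section
/- Let k̄ = l̄ be a nonnegative integer. Then the European put values on the full and on the truncated tree satisfy V − V^{TT} ≤ 4·e^{−rτ}·K·∑_{k=k̄+1}^{n} q̃^{(n)}(k). -/
open Finset

open scoped Classical

noncomputable section

open HScut

namespace HScut

lemma mem_paths_one {n : ℕ} {s : Fin n → ℤ} :
    s ∈ paths n 1 ↔ ∀ i, -1 ≤ s i ∧ s i ≤ 1 := by
  simp [paths, Fintype.mem_piFinset, Finset.mem_Icc]

lemma levelAt_zero (n : ℕ) (s : Fin n → ℤ) : levelAt n s 0 = 0 := by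
  simp [levelAt]

lemma levelAt_succ (n : ℕ) (s : Fin n → ℤ) (t : ℕ) (ht : t < n) :
    levelAt n s (t + 1) = levelAt n s t + s ⟨t, ht⟩ := by
  unfold levelAt
  rw [show (Finset.univ.filter (fun i : Fin n => (i : ℕ) < t + 1)) =
      insert ⟨t, ht⟩ (Finset.univ.filter (fun i : Fin n => (i : ℕ) < t)) by
    ext i
    simp only [Finset.mem_filter, Finset.mem_insert, Finset.mem_univ, true_and, Fin.ext_iff]
    omega]
  rw [Finset.sum_insert (by simp)]
  ring

lemma levelAt_split (n : ℕ) (s : Fin n → ℤ) {T t : ℕ} (hTt : T ≤ t) :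
    levelAt n s t = levelAt n s T +
      ∑ i ∈ Finset.univ.filter (fun i : Fin n => T ≤ (i : ℕ) ∧ (i : ℕ) < t), s i := by
  unfold levelAt
  rw [← Finset.sum_union]
  · congr 1
    ext i
    simp only [Finset.mem_filter, Finset.mem_union, Finset.mem_univ, true_and]
    omega
  · rw [Finset.disjoint_left]
    intro a ha hb
    simp only [Finset.mem_filter, Finset.mem_univ, true_and] at ha hb
    omega

lemma abs_levelAt_le (n : ℕ) (s : Fin n → ℤ) (hs : s ∈ paths n 1) (t : ℕ) :
    |levelAt n s t| ≤ n := by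
  rw [mem_paths_one] at hs
  calc |levelAt n s t| ≤ ∑ i ∈ Finset.univ.filter (fun i : Fin n => (i : ℕ) < t), |s i| :=
        Finset.abs_sum_le_sum_abs _ _
    _ ≤ ∑ i ∈ Finset.univ.filter (fun i : Fin n => (i : ℕ) < t), 1 :=
        Finset.sum_le_sum (fun i _ => by have := hs i; rcases abs_le.2 ⟨this.1, this.2⟩ with h; omega)
    _ = ((Finset.univ.filter (fun i : Fin n => (i : ℕ) < t)).card : ℤ) := by simp
    _ ≤ (n : ℤ) := by
        have h1 : (Finset.univ.filter (fun i : Fin n => (i : ℕ) < t)).card ≤ n := by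
          simpa using Finset.card_filter_le Finset.univ (fun i : Fin n => (i : ℕ) < t)
        exact_mod_cast h1

/-- first hitting time of level `c` -/
def hitT (n : ℕ) (c : ℤ) (s : Fin n → ℤ) : ℕ :=
  if h : ∃ t, c ≤ levelAt n s t then Nat.find h else 0

lemma hitT_spec (n : ℕ) (c : ℤ) (s : Fin n → ℤ) (hex : ∃ t ≤ n, c ≤ levelAt n s t) :
    hitT n c s ≤ n ∧ c ≤ levelAt n s (hitT n c s) ∧
      ∀ t < hitT n c s, levelAt n s t < c := by
  obtain ⟨t0, ht0, hl0⟩ := hex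
  have h : ∃ t, c ≤ levelAt n s t := ⟨t0, hl0⟩
  rw [hitT, dif_pos h]
  refine ⟨le_trans (Nat.find_le hl0) ht0, Nat.find_spec h, fun t ht => ?_⟩
  have := Nat.find_min h ht
  omega

lemma levelAt_hitT (n : ℕ) (c : ℤ) (s : Fin n → ℤ) (hs : s ∈ paths n 1) (hc : 1 ≤ c)
    (hex : ∃ t ≤ n, c ≤ levelAt n s t) : levelAt n s (hitT n c s) = c := by
  obtain ⟨hTn, hTc, hTmin⟩ := hitT_spec n c s hex
  rcases Nat.eq_zero_or_pos (hitT n c s) with h0 | hpos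
  · rw [h0] at hTc ⊢
    rw [levelAt_zero] at hTc ⊢
    omega
  · obtain ⟨t', hT'⟩ : ∃ t', hitT n c s = t' + 1 := ⟨hitT n c s - 1, by omega⟩
    rw [hT'] at hTc ⊢
    have ht'n : t' < n := by omega
    have hlt := hTmin t' (by omega)
    rw [levelAt_succ n s t' ht'n] at hTc ⊢
    have := (mem_paths_one.mp hs) ⟨t', ht'n⟩
    omega

end HScut


namespace HScut

/-- reflection of the path after the first hitting time of level `c` -/
def reflPath (n : ℕ) (c : ℤ) (s : Fin n → ℤ) : Fin n → ℤ :=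
  fun i => if (i : ℕ) < hitT n c s then s i else -(s i)

lemma hitT_eq_of (n : ℕ) (c : ℤ) (s : Fin n → ℤ) (T : ℕ)
    (hT : c ≤ levelAt n s T) (hmin : ∀ t < T, levelAt n s t < c) :
    hitT n c s = T := by
  have h : ∃ t, c ≤ levelAt n s t := ⟨T, hT⟩
  rw [hitT, dif_pos h]
  apply le_antisymm (Nat.find_le hT)
  by_contra hlt
  push_neg at hlt
  have h1 := Nat.find_spec h
  have h2 := hmin _ hlt
  omega

lemma reflPath_mem (n : ℕ) (c : ℤ) (s : Fin n → ℤ) (hs : s ∈ paths n 1) :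
    reflPath n c s ∈ paths n 1 := by
  rw [mem_paths_one] at hs ⊢
  intro i
  have := hs i
  unfold reflPath
  by_cases hi : (i : ℕ) < hitT n c s <;> simp [hi] <;> omega

lemma modWeight_reflPath (n : ℕ) (c : ℤ) (q : ℤ → ℝ) (s : Fin n → ℤ) :
    modWeight n q (reflPath n c s) = modWeight n q s := by
  unfold modWeight reflPath
  apply Finset.prod_congr rfl
  intro i _
  by_cases hi : (i : ℕ) < hitT n c s
  · simp [hi]
  · simp only [if_neg hi, neg_eq_zero, neg_neg]
    by_cases h0 : s i = 0
    · simp [h0]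
    · simp [h0, max_comm]

lemma levelAt_reflPath_of_le (n : ℕ) (c : ℤ) (s : Fin n → ℤ) (t : ℕ)
    (ht : t ≤ hitT n c s) :
    levelAt n (reflPath n c s) t = levelAt n s t := by
  unfold levelAt
  apply Finset.sum_congr rfl
  intro i hi
  simp only [Finset.mem_filter, Finset.mem_univ, true_and] at hi
  have : (i : ℕ) < hitT n c s := by omega
  simp [reflPath, this]

lemma levelAt_reflPath_of_ge (n : ℕ) (c : ℤ) (s : Fin n → ℤ) (hs : s ∈ paths n 1)
    (hc : 1 ≤ c) (hex : ∃ t ≤ n, c ≤ levelAt n s t) (t : ℕ) (ht : hitT n c s ≤ t) :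
    levelAt n (reflPath n c s) t = 2 * c - levelAt n s t := by
  have hhit := levelAt_hitT n c s hs hc hex
  have h1 := levelAt_split n s ht
  have h2 := levelAt_split n (reflPath n c s) ht
  have h3 : levelAt n (reflPath n c s) (hitT n c s) = c := by
    rw [levelAt_reflPath_of_le n c s _ le_rfl, hhit]
  have h4 : ∑ i ∈ Finset.univ.filter
        (fun i : Fin n => hitT n c s ≤ (i : ℕ) ∧ (i : ℕ) < t), reflPath n c s i
      = -∑ i ∈ Finset.univ.filter
        (fun i : Fin n => hitT n c s ≤ (i : ℕ) ∧ (i : ℕ) < t), s i := by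
    rw [← Finset.sum_neg_distrib]
    apply Finset.sum_congr rfl
    intro i hi
    simp only [Finset.mem_filter, Finset.mem_univ, true_and] at hi
    have : ¬ (i : ℕ) < hitT n c s := by omega
    simp [reflPath, this]
  rw [h2, h3, h4]
  omega

lemma hitT_reflPath (n : ℕ) (c : ℤ) (s : Fin n → ℤ) (hs : s ∈ paths n 1)
    (hc : 1 ≤ c) (hex : ∃ t ≤ n, c ≤ levelAt n s t) :
    hitT n c (reflPath n c s) = hitT n c s := by
  obtain ⟨hTn, hTc, hTmin⟩ := hitT_spec n c s hex
  apply hitT_eq_of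
  · rw [levelAt_reflPath_of_le n c s _ le_rfl]
    exact hTc
  · intro t htlt
    rw [levelAt_reflPath_of_le n c s _ (le_of_lt htlt)]
    exact hTmin t htlt

lemma reflPath_involutive (n : ℕ) (c : ℤ) (s : Fin n → ℤ) (hs : s ∈ paths n 1)
    (hc : 1 ≤ c) (hex : ∃ t ≤ n, c ≤ levelAt n s t) :
    reflPath n c (reflPath n c s) = s := by
  have h := hitT_reflPath n c s hs hc hex
  funext i
  have h2 : reflPath n c (reflPath n c s) i =
      if (i : ℕ) < hitT n c s then reflPath n c s i else -(reflPath n c s i) := by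
    rw [← h]; rfl
  rw [h2]
  unfold reflPath
  by_cases hi : (i : ℕ) < hitT n c s <;> simp [hi]

lemma reflPath_hex (n : ℕ) (c : ℤ) (s : Fin n → ℤ) (hs : s ∈ paths n 1)
    (hc : 1 ≤ c) (hex : ∃ t ≤ n, c ≤ levelAt n s t) :
    ∃ t ≤ n, c ≤ levelAt n (reflPath n c s) t := by
  obtain ⟨hTn, hTc, hTmin⟩ := hitT_spec n c s hex
  exact ⟨hitT n c s, hTn, by rw [levelAt_reflPath_of_le n c s _ le_rfl]; exact hTc⟩

end HScut


namespace HScut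

lemma pathWeight_nonneg {n : ℕ} {q : ℤ → ℝ} (hqm : 0 ≤ q (-1)) (hq0 : 0 ≤ q 0)
    (hqp : 0 ≤ q 1) {s : Fin n → ℤ} (hs : s ∈ paths n 1) : 0 ≤ pathWeight n q s := by
  rw [mem_paths_one] at hs
  apply Finset.prod_nonneg
  intro i _
  have h := hs i
  have : s i = -1 ∨ s i = 0 ∨ s i = 1 := by omega
  rcases this with h1 | h1 | h1 <;> rw [h1] <;> assumption

lemma modWeight_nonneg {n : ℕ} {q : ℤ → ℝ} (hqm : 0 ≤ q (-1)) (hq0 : 0 ≤ q 0)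
    (hqp : 0 ≤ q 1) {s : Fin n → ℤ} (hs : s ∈ paths n 1) : 0 ≤ modWeight n q s := by
  rw [mem_paths_one] at hs
  apply Finset.prod_nonneg
  intro i _
  have h := hs i
  have : s i = -1 ∨ s i = 0 ∨ s i = 1 := by omega
  rcases this with h1 | h1 | h1 <;> simp [h1, le_max_iff] <;> tauto

lemma pathWeight_le_modWeight {n : ℕ} {q : ℤ → ℝ} (hqm : 0 ≤ q (-1)) (hq0 : 0 ≤ q 0)
    (hqp : 0 ≤ q 1) {s : Fin n → ℤ} (hs : s ∈ paths n 1) :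
    pathWeight n q s ≤ modWeight n q s := by
  have hs' := mem_paths_one.mp hs
  apply Finset.prod_le_prod
  · intro i _
    have h := hs' i
    have : s i = -1 ∨ s i = 0 ∨ s i = 1 := by omega
    rcases this with h1 | h1 | h1 <;> rw [h1] <;> assumption
  · intro i _
    by_cases h0 : s i = 0
    · simp [h0]
    · rw [if_neg h0]; exact le_max_left _ _

lemma neg_mem_paths {n : ℕ} {s : Fin n → ℤ} (hs : s ∈ paths n 1) :
    (fun i => -(s i)) ∈ paths n 1 := by
  rw [mem_paths_one] at hs ⊢
  intro i
  have := hs i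
  constructor <;> omega

lemma levelAt_neg (n : ℕ) (s : Fin n → ℤ) (t : ℕ) :
    levelAt n (fun i => -(s i)) t = -levelAt n s t := by
  unfold levelAt
  rw [← Finset.sum_neg_distrib]

lemma modWeight_neg (n : ℕ) (q : ℤ → ℝ) (s : Fin n → ℤ) :
    modWeight n q (fun i => -(s i)) = modWeight n q s := by
  unfold modWeight
  apply Finset.prod_congr rfl
  intro i _
  simp only [neg_eq_zero, neg_neg]
  by_cases h0 : s i = 0
  · simp [h0]
  · simp [h0, max_comm]

lemma up_sum_bound (n : ℕ) (q : ℤ → ℝ) (hqm : 0 ≤ q (-1)) (hq0 : 0 ≤ q 0)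
    (hqp : 0 ≤ q 1) (c : ℤ) (hc : 1 ≤ c) :
    ∑ s ∈ (paths n 1).filter (fun s => ∃ t ≤ n, c ≤ levelAt n s t), modWeight n q s
      ≤ 2 * ∑ s ∈ (paths n 1).filter (fun s => c ≤ levelAt n s n), modWeight n q s := by
  set U := (paths n 1).filter (fun s => ∃ t ≤ n, c ≤ levelAt n s t) with hU
  set B := (paths n 1).filter (fun s => c ≤ levelAt n s n) with hB
  have hBnn : ∀ s ∈ B, 0 ≤ modWeight n q s := fun s hs =>
    modWeight_nonneg hqm hq0 hqp (Finset.mem_filter.mp hs).1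
  have hsplit := Finset.sum_filter_add_sum_filter_not U (fun s => c ≤ levelAt n s n)
      (modWeight n q)
  have h1 : ∑ s ∈ U.filter (fun s => c ≤ levelAt n s n), modWeight n q s
      ≤ ∑ s ∈ B, modWeight n q s := by
    apply Finset.sum_le_sum_of_subset_of_nonneg
    · intro s hsmem
      simp only [hU, hB, Finset.mem_filter, Finset.filter_filter] at hsmem ⊢
      tauto
    · intro s hsB _
      exact hBnn s hsB
  have h2 : ∑ s ∈ U.filter (fun s => ¬ c ≤ levelAt n s n), modWeight n q s
      ≤ ∑ s ∈ B, modWeight n q s := by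
    set U2 := U.filter (fun s => ¬ c ≤ levelAt n s n) with hU2
    have hmem : ∀ s ∈ U2, s ∈ paths n 1 ∧ (∃ t ≤ n, c ≤ levelAt n s t) ∧
        ¬ c ≤ levelAt n s n := by
      intro s hsmem
      simp only [hU2, hU, Finset.mem_filter] at hsmem
      exact ⟨hsmem.1.1, hsmem.1.2, hsmem.2⟩
    have hinj : ∀ x ∈ U2, ∀ y ∈ U2, reflPath n c x = reflPath n c y → x = y := by
      intro x hx y hy hxy
      obtain ⟨hxp, hxe, _⟩ := hmem x hx
      obtain ⟨hyp, hye, _⟩ := hmem y hy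
      rw [← reflPath_involutive n c x hxp hc hxe, hxy,
        reflPath_involutive n c y hyp hc hye]
    have himg : ∑ s ∈ U2.image (reflPath n c), modWeight n q s
        = ∑ s ∈ U2, modWeight n q s := by
      rw [Finset.sum_image hinj]
      exact Finset.sum_congr rfl fun s _ => modWeight_reflPath n c q s
    rw [← himg]
    apply Finset.sum_le_sum_of_subset_of_nonneg
    · intro s' hs'
      obtain ⟨s, hsU2, rfl⟩ := Finset.mem_image.mp hs'
      obtain ⟨hsp, hse, hsn⟩ := hmem s hsU2
      obtain ⟨hTn, _, _⟩ := hitT_spec n c s hse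
      simp only [hB, Finset.mem_filter]
      refine ⟨reflPath_mem n c s hsp, ?_⟩
      rw [levelAt_reflPath_of_ge n c s hsp hc hse n hTn]
      omega
    · intro s hsB _
      exact hBnn s hsB
  calc ∑ s ∈ U, modWeight n q s
      = ∑ s ∈ U.filter (fun s => c ≤ levelAt n s n), modWeight n q s
        + ∑ s ∈ U.filter (fun s => ¬ c ≤ levelAt n s n), modWeight n q s := hsplit.symm
    _ ≤ ∑ s ∈ B, modWeight n q s + ∑ s ∈ B, modWeight n q s := add_le_add h1 h2
    _ = 2 * ∑ s ∈ B, modWeight n q s := by ring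

lemma down_sum_eq (n : ℕ) (q : ℤ → ℝ) (c : ℤ) :
    ∑ s ∈ (paths n 1).filter (fun s => ∃ t ≤ n, levelAt n s t ≤ -c), modWeight n q s
      = ∑ s ∈ (paths n 1).filter (fun s => ∃ t ≤ n, c ≤ levelAt n s t), modWeight n q s := by
  apply Finset.sum_nbij' (i := fun s => (fun j => -(s j))) (j := fun s => (fun j => -(s j)))
  · intro s hs
    simp only [Finset.mem_filter] at hs ⊢
    refine ⟨neg_mem_paths hs.1, ?_⟩
    obtain ⟨t, ht, hl⟩ := hs.2
    exact ⟨t, ht, by rw [levelAt_neg]; omega⟩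
  · intro s hs
    simp only [Finset.mem_filter] at hs ⊢
    refine ⟨neg_mem_paths hs.1, ?_⟩
    obtain ⟨t, ht, hl⟩ := hs.2
    exact ⟨t, ht, by rw [levelAt_neg]; omega⟩
  · intro s _
    funext j
    simp
  · intro s _
    funext j
    simp
  · intro s _
    exact (modWeight_neg n q s).symm

end HScut


namespace HScut

lemma up_sum_eq_qtilde (n : ℕ) (q : ℤ → ℝ) (kbar : ℕ) :
    ∑ s ∈ (paths n 1).filter (fun s => ((kbar : ℤ) + 1) ≤ levelAt n s n), modWeight n q s
      = ∑ k ∈ Finset.Icc (kbar + 1) n, qtilde n 1 q (k : ℤ) := by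
  rw [← Finset.sum_fiberwise_of_maps_to (g := fun s => (levelAt n s n).toNat)
      (t := Finset.Icc (kbar + 1) n) ?_ (modWeight n q)]
  · apply Finset.sum_congr rfl
    intro k hk
    simp only [Finset.mem_Icc] at hk
    unfold qtilde
    apply Finset.sum_congr _ (fun _ _ => rfl)
    ext s
    simp only [Finset.mem_filter, Finset.filter_filter]
    constructor
    · rintro ⟨h1, h2, h3⟩
      exact ⟨h1, by omega⟩
    · rintro ⟨h1, h2⟩
      refine ⟨h1, by omega, by omega⟩
  · intro s hsmem
    simp only [Finset.mem_filter] at hsmem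
    have habs := abs_levelAt_le n s hsmem.1 n
    rw [abs_le] at habs
    have h2 := hsmem.2
    simp only [Finset.mem_Icc]
    omega

end HScut


/-- With `k̄ = l̄`, the European put values on the full and truncated tree (m = 1) satisfy
`V − V^{TT} ≤ 4 e^{−rτ} K ∑_{k=k̄+1}^{n} q̃^{(n)}(k)`. -/
theorem put_truncation_bound_one (n : ℕ) (hn : 1 ≤ n) (q : ℤ → ℝ)
    (hqm : 0 ≤ q (-1)) (hq0 : 0 ≤ q 0) (hqp : 0 ≤ q 1)
    (hsum : q (-1) + q 0 + q 1 = 1)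
    (S0 K σ τ h r p : ℝ) (hS0 : 0 < S0) (hK : 0 < K) (hh : 0 < h) (hτ : 0 < τ)
    (hp0 : 0 ≤ p) (hp1 : p ≤ 1) (kbar : ℕ) :
    Vput n 1 q p S0 K σ τ h r - VTT n 1 q p S0 K σ τ h r kbar kbar ≤
      4 * Real.exp (-(r * τ)) * K * ∑ k ∈ Finset.Icc (kbar + 1) n, qtilde n 1 q (k : ℤ) := by
  classical
  have hexp : (0:ℝ) ≤ Real.exp (-(r * τ)) := (Real.exp_pos _).le
  -- the Brownian part `A k`
  set A : ℤ → ℝ := fun k => ∑ j ∈ Finset.range (n + 1),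
      putPayoff n S0 K σ (τ / n) h j k * binomP n p j with hA
  have hPnn : ∀ j, 0 ≤ binomP n p j := by
    intro j
    unfold binomP
    have h1 : (0:ℝ) ≤ 1 - p := by linarith
    positivity
  have hPsum : ∑ j ∈ Finset.range (n + 1), binomP n p j = 1 := by
    have h1 : p + (1 - p) = 1 := by ring
    have h2 := add_pow p (1 - p) n
    rw [h1, one_pow] at h2
    rw [show ∑ j ∈ Finset.range (n + 1), binomP n p j
        = ∑ j ∈ Finset.range (n + 1), p ^ j * (1 - p) ^ (n - j) * (n.choose j : ℝ) from
      Finset.sum_congr rfl fun j _ => by unfold binomP; ring]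
    exact h2.symm
  have hpay0 : ∀ j k, 0 ≤ putPayoff n S0 K σ (τ / n) h j k := fun j k => le_max_right _ _
  have hpayK : ∀ (j : ℕ) (k : ℤ), putPayoff n S0 K σ (τ / n) h j k ≤ K := by
    intro j k
    unfold putPayoff
    apply max_le _ hK.le
    have hpos : (0:ℝ) < S0 * Real.exp ((2 * (j : ℝ) - (n : ℝ)) * (σ * Real.sqrt (τ / n))
        + h * (k : ℝ)) := by positivity
    linarith
  have hA0 : ∀ k, 0 ≤ A k := by
    intro k
    apply Finset.sum_nonneg
    intro j _
    exact mul_nonneg (hpay0 j k) (hPnn j)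
  have hAK : ∀ k, A k ≤ K := by
    intro k
    calc A k ≤ ∑ j ∈ Finset.range (n + 1), K * binomP n p j :=
          Finset.sum_le_sum fun j _ => mul_le_mul_of_nonneg_right (hpayK j k) (hPnn j)
      _ = K := by rw [← Finset.mul_sum, hPsum, mul_one]
  set F : (Fin n → ℤ) → ℝ := fun s => A (levelAt n s n) * pathWeight n q s with hF
  -- rewrite V
  have hV : Vput n 1 q p S0 K σ τ h r = Real.exp (-(r * τ)) * ∑ s ∈ paths n 1, F s := by
    unfold Vput
    congr 1
    rw [← Finset.sum_fiberwise_of_maps_to (g := fun s => levelAt n s n)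
        (t := Finset.Icc (-((1:ℤ) * n)) ((1:ℤ) * n)) ?_ F]
    · apply Finset.sum_congr rfl
      intro k _
      rw [show ∑ j ∈ Finset.range (n + 1),
            putPayoff n S0 K σ (τ / n) h j k * binomP n p j * qfull n 1 q k
          = A k * qfull n 1 q k from by rw [hA, Finset.sum_mul]]
      unfold qfull
      rw [Finset.mul_sum]
      apply Finset.sum_congr rfl
      intro s hsmem
      have hlk : levelAt n s n = k := (Finset.mem_filter.mp hsmem).2
      rw [hF]
      simp only [hlk]
    · intro s hsmem
      have habs := abs_levelAt_le n s hsmem n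
      rw [abs_le] at habs
      simp only [Finset.mem_Icc, one_mul]
      exact habs
  -- rewrite V^{TT}
  set good : Finset (Fin n → ℤ) := (paths n 1).filter
      (fun s => ∀ t ≤ n, -(kbar : ℤ) ≤ levelAt n s t ∧ levelAt n s t ≤ (kbar : ℤ)) with hgood
  have hVTT : VTT n 1 q p S0 K σ τ h r kbar kbar
      = Real.exp (-(r * τ)) * ∑ s ∈ good, F s := by
    unfold VTT
    congr 1
    rw [← Finset.sum_fiberwise_of_maps_to (g := fun s => levelAt n s n)
        (t := Finset.Icc (-(kbar : ℤ)) (kbar : ℤ)) ?_ F]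
    · apply Finset.sum_congr rfl
      intro k _
      rw [show ∑ j ∈ Finset.range (n + 1),
            putPayoff n S0 K σ (τ / n) h j k * binomP n p j * qcut n 1 q kbar kbar k
          = A k * qcut n 1 q kbar kbar k from by rw [hA, Finset.sum_mul]]
      unfold qcut
      rw [Finset.mul_sum]
      rw [show good.filter (fun s => levelAt n s n = k)
          = (paths n 1).filter (fun s => levelAt n s n = k ∧
              ∀ t ≤ n, -(kbar : ℤ) ≤ levelAt n s t ∧ levelAt n s t ≤ (kbar : ℤ)) from by
        rw [hgood, Finset.filter_filter]
        apply Finset.filter_congr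
        intro s _
        tauto]
      apply Finset.sum_congr rfl
      intro s hsmem
      have hlk : levelAt n s n = k := (Finset.mem_filter.mp hsmem).2.1
      rw [hF]
      simp only [hlk]
    · intro s hsmem
      rw [hgood, Finset.mem_filter] at hsmem
      have := hsmem.2 n le_rfl
      simp only [Finset.mem_Icc]
      exact this
  set bad : Finset (Fin n → ℤ) := (paths n 1).filter
      (fun s => ¬ ∀ t ≤ n, -(kbar : ℤ) ≤ levelAt n s t ∧ levelAt n s t ≤ (kbar : ℤ)) with hbad
  have hsplit : ∑ s ∈ paths n 1, F s = ∑ s ∈ good, F s + ∑ s ∈ bad, F s :=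
    (Finset.sum_filter_add_sum_filter_not (paths n 1) _ F).symm
  -- the exceedance sets
  set c : ℤ := (kbar : ℤ) + 1 with hc
  set U : Finset (Fin n → ℤ) :=
      (paths n 1).filter (fun s => ∃ t ≤ n, c ≤ levelAt n s t) with hUdef
  set D : Finset (Fin n → ℤ) :=
      (paths n 1).filter (fun s => ∃ t ≤ n, levelAt n s t ≤ -c) with hDdef
  have hbadsub : bad ⊆ U ∪ D := by
    intro s hsmem
    rw [hbad, Finset.mem_filter] at hsmem
    obtain ⟨hsp, hnb⟩ := hsmem
    push_neg at hnb
    obtain ⟨t, ht, hb⟩ := hnb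
    rw [Finset.mem_union, hUdef, hDdef, Finset.mem_filter, Finset.mem_filter]
    by_cases hcase : c ≤ levelAt n s t
    · exact Or.inl ⟨hsp, t, ht, hcase⟩
    · refine Or.inr ⟨hsp, t, ht, ?_⟩
      by_cases h1 : -(kbar : ℤ) ≤ levelAt n s t
      · exact absurd (hb h1) (by omega)
      · omega
  have hmwnn : ∀ s ∈ paths n 1, 0 ≤ modWeight n q s := fun s hs =>
    modWeight_nonneg hqm hq0 hqp hs
  have hUDnn : ∀ s ∈ U ∪ D, 0 ≤ modWeight n q s := by
    intro s hs
    rcases Finset.mem_union.mp hs with h1 | h1 <;>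
      exact hmwnn s (Finset.mem_filter.mp h1).1
  have hbound1 : ∑ s ∈ bad, modWeight n q s
      ≤ ∑ s ∈ U, modWeight n q s + ∑ s ∈ D, modWeight n q s := by
    have h1 : ∑ s ∈ bad, modWeight n q s ≤ ∑ s ∈ U ∪ D, modWeight n q s :=
      Finset.sum_le_sum_of_subset_of_nonneg hbadsub (fun s hs _ => hUDnn s hs)
    have h2 := Finset.sum_union_inter (s₁ := U) (s₂ := D) (f := modWeight n q)
    have h3 : 0 ≤ ∑ s ∈ U ∩ D, modWeight n q s := by
      apply Finset.sum_nonneg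
      intro s hs
      exact hmwnn s (Finset.mem_filter.mp (Finset.mem_of_mem_inter_left hs)).1
    linarith
  have hdown : ∑ s ∈ D, modWeight n q s = ∑ s ∈ U, modWeight n q s := down_sum_eq n q c
  have hup : ∑ s ∈ U, modWeight n q s
      ≤ 2 * ∑ s ∈ (paths n 1).filter (fun s => c ≤ levelAt n s n), modWeight n q s :=
    up_sum_bound n q hqm hq0 hqp c (by omega)
  have hqt : ∑ s ∈ (paths n 1).filter (fun s => c ≤ levelAt n s n), modWeight n q s
      = ∑ k ∈ Finset.Icc (kbar + 1) n, qtilde n 1 q (k : ℤ) := up_sum_eq_qtilde n q kbar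
  have hbadpi : ∑ s ∈ bad, F s ≤ K * ∑ s ∈ bad, modWeight n q s := by
    have h1 : ∑ s ∈ bad, F s ≤ ∑ s ∈ bad, K * modWeight n q s := by
      apply Finset.sum_le_sum
      intro s hs
      have hsp : s ∈ paths n 1 := (Finset.mem_filter.mp hs).1
      calc F s = A (levelAt n s n) * pathWeight n q s := rfl
        _ ≤ K * pathWeight n q s :=
            mul_le_mul_of_nonneg_right (hAK _) (pathWeight_nonneg hqm hq0 hqp hsp)
        _ ≤ K * modWeight n q s :=
            mul_le_mul_of_nonneg_left (pathWeight_le_modWeight hqm hq0 hqp hsp) hK.le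
    rw [← Finset.mul_sum] at h1
    exact h1
  have hbadtotal : ∑ s ∈ bad, F s
      ≤ 4 * K * ∑ k ∈ Finset.Icc (kbar + 1) n, qtilde n 1 q (k : ℤ) := by
    calc ∑ s ∈ bad, F s ≤ K * ∑ s ∈ bad, modWeight n q s := hbadpi
      _ ≤ K * (∑ s ∈ U, modWeight n q s + ∑ s ∈ D, modWeight n q s) :=
          mul_le_mul_of_nonneg_left hbound1 hK.le
      _ = K * (2 * ∑ s ∈ U, modWeight n q s) := by rw [hdown]; ring
      _ ≤ K * (2 * (2 * ∑ s ∈ (paths n 1).filter (fun s => c ≤ levelAt n s n),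
            modWeight n q s)) := by
          apply mul_le_mul_of_nonneg_left _ hK.le
          linarith
      _ = 4 * K * ∑ k ∈ Finset.Icc (kbar + 1) n, qtilde n 1 q (k : ℤ) := by
          rw [hqt]; ring
  rw [hV, hVTT, hsplit]
  have hfinal := mul_le_mul_of_nonneg_left hbadtotal hexp
  ring_nf
  ring_nf at hfinal
  linarith
end
end
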